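/- arXiv:2306.02192 — 5 statements merged into one kernel-verified Lean document; each statement's English description precedes it below -/
import Mathlib

section
/- Let L ≥ 4 be an integer, h = 1/L, and let f : ℝ^d × ℝ^n → ℝ^d and g : ℝ^d → ℝ be continuously differentiable. Fix an input x ∈ ℝ^d and target y ∈ ℝ. For weights Θ = (θ_0,…,θ_{L−1}) ∈ (ℝ^n)^L define the Leapfrog network states z_0 = x, z_1 = z_0 + h f(z_0, θ_0), z_{l+2} = z_l + 2h f(z_{l+1}, θ_{l+1}) for l = 0,…,L−2, and the loss E(Θ) = (1/2)|g(z_L) − y|². Define the back-propagator vectors p_0,…,p_{L−1} ∈ ℝ^d backward by p_{L−1}ᵀ = 2(g(z_L) − y)∇g(z_L)ᵀ, p_{L−2}ᵀ = 2h p_{L−1}ᵀ ∂_z f(z_{L−1}, θ_{L−1}), p_lᵀ = p_{l+2}ᵀ + 2h p_{l+1}ᵀ ∂_z f(z_{l+1}, θ_{l+1}) for l = L−3,…,1, and p_0ᵀ = (1/2)p_2ᵀ + h p_1ᵀ ∂_z f(z_1, θ_1). Then for every l = 0,1,…,L−1 the partial gradient of E with respect to θ_l satisfies L ∂_{θ_l}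 E = p_lᵀ ∂_θ f(z_l, θ_l). -/
noncomputable section

/-- Jacobian of `f` with respect to its first (state) argument. -/
def jacZ {d n : ℕ}
    (f : EuclideanSpace ℝ (Fin d) × EuclideanSpace ℝ (Fin n) → EuclideanSpace ℝ (Fin d))
    (z : EuclideanSpace ℝ (Fin d)) (w : EuclideanSpace ℝ (Fin n)) :
    EuclideanSpace ℝ (Fin d) →L[ℝ] EuclideanSpace ℝ (Fin d) :=
  fderiv ℝ (fun v => f (v, w)) z

/-- Jacobian of `f` with respect to its second (parameter) argument. -/
def jacTh {d n : ℕ}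
    (f : EuclideanSpace ℝ (Fin d) × EuclideanSpace ℝ (Fin n) → EuclideanSpace ℝ (Fin d))
    (z : EuclideanSpace ℝ (Fin d)) (w : EuclideanSpace ℝ (Fin n)) :
    EuclideanSpace ℝ (Fin n) →L[ℝ] EuclideanSpace ℝ (Fin d) :=
  fderiv ℝ (fun v => f (z, v)) w

/-- Pair `(z_l, z_{l+1})` of Leapfrog states. -/
def leapPair {d n : ℕ}
    (f : EuclideanSpace ℝ (Fin d) × EuclideanSpace ℝ (Fin n) → EuclideanSpace ℝ (Fin d))
    (x : EuclideanSpace ℝ (Fin d)) (h : ℝ) (Θ : ℕ → EuclideanSpace ℝ (Fin n)) :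
    ℕ → EuclideanSpace ℝ (Fin d) × EuclideanSpace ℝ (Fin d)
  | 0 => (x, x + h • f (x, Θ 0))
  | l + 1 =>
      ((leapPair f x h Θ l).2,
        (leapPair f x h Θ l).1 + (2 * h) • f ((leapPair f x h Θ l).2, Θ (l + 1)))

/-- The Leapfrog state `z_l`. -/
def leap {d n : ℕ}
    (f : EuclideanSpace ℝ (Fin d) × EuclideanSpace ℝ (Fin n) → EuclideanSpace ℝ (Fin d))
    (x : EuclideanSpace ℝ (Fin d)) (h : ℝ) (Θ : ℕ → EuclideanSpace ℝ (Fin n)) (l : ℕ) :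
    EuclideanSpace ℝ (Fin d) :=
  (leapPair f x h Θ l).1

/-- Scalar coefficients of the block averaging matrix `T`. -/
def Tcoef (i j : ℕ) : ℝ :=
  if i = 0 then (if j = 0 then 1 else if j = 1 then 3 / 4 else if j = 3 then -(1 / 4) else 0)
  else if j = i then 1 / 2
  else if i = 1 ∧ j = 0 then 1 / 2
  else if j + 1 = i then 1 / 4
  else if j = i + 1 then 1 / 4
  else 0

lemma fderiv_comp_prod {d n : ℕ} {f : EuclideanSpace ℝ (Fin d) × EuclideanSpace ℝ (Fin n) → EuclideanSpace ℝ (Fin d)}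
    (hf : ContDiff ℝ 1 f) (z : EuclideanSpace ℝ (Fin d)) (w : EuclideanSpace ℝ (Fin n))
    {E : Type*} [NormedAddCommGroup E] [NormedSpace ℝ E]
    (B : E →L[ℝ] EuclideanSpace ℝ (Fin d)) (C : E →L[ℝ] EuclideanSpace ℝ (Fin n)) :
    (fderiv ℝ f (z, w)).comp (B.prod C) = (jacZ f z w).comp B + (jacTh f z w).comp C := by
  have hdf : HasFDerivAt f (fderiv ℝ f (z, w)) (z, w) :=
    ((hf.differentiable one_ne_zero) (z, w)).hasFDerivAt
  have h1 : jacZ f z w = (fderiv ℝ f (z, w)).comp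
      ((ContinuousLinearMap.id ℝ _).prod 0) :=
    (hdf.comp z ((hasFDerivAt_id z).prodMk (hasFDerivAt_const w z))).fderiv
  have h2 : jacTh f z w = (fderiv ℝ f (z, w)).comp
      ((0 : _ →L[ℝ] _).prod (ContinuousLinearMap.id ℝ _)) :=
    (hdf.comp w ((hasFDerivAt_const z w).prodMk (hasFDerivAt_id w))).fderiv
  ext u
  have hsplit : (B u, C u) = ((B u, 0) : _ × _) + ((0, C u) : _ × _) := by simp
  simp only [ContinuousLinearMap.comp_apply, ContinuousLinearMap.prod_apply,
    ContinuousLinearMap.add_apply, h1, h2, ContinuousLinearMap.zero_apply,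
    ContinuousLinearMap.id_apply]
  rw [hsplit, map_add]

/-- Derivative data for the leapfrog recursion w.r.t. the parameter `θ_l`. -/
def Ader {d n : ℕ}
    (f : EuclideanSpace ℝ (Fin d) × EuclideanSpace ℝ (Fin n) → EuclideanSpace ℝ (Fin d))
    (x : EuclideanSpace ℝ (Fin d)) (h : ℝ) (Θ : ℕ → EuclideanSpace ℝ (Fin n)) (l : ℕ) :
    ℕ → ((EuclideanSpace ℝ (Fin n) →L[ℝ] EuclideanSpace ℝ (Fin d)) ×
         (EuclideanSpace ℝ (Fin n) →L[ℝ] EuclideanSpace ℝ (Fin d)))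
  | 0 => (0, if l = 0 then h • jacTh f x (Θ 0) else 0)
  | m + 1 => ((Ader f x h Θ l m).2,
      (Ader f x h Θ l m).1 + (2 * h) •
        ((jacZ f (leap f x h Θ (m + 1)) (Θ (m + 1))).comp (Ader f x h Θ l m).2
          + if l = m + 1 then jacTh f (leap f x h Θ (m + 1)) (Θ (m + 1)) else 0))

lemma leapPair_hasFDerivAt {d n : ℕ}
    {f : EuclideanSpace ℝ (Fin d) × EuclideanSpace ℝ (Fin n) → EuclideanSpace ℝ (Fin d)}
    (hf : ContDiff ℝ 1 f)
    (x : EuclideanSpace ℝ (Fin d)) (h : ℝ) (Θ : ℕ → EuclideanSpace ℝ (Fin n)) (l : ℕ) :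
    ∀ m, HasFDerivAt (fun v => leapPair f x h (Function.update Θ l v) m)
      (((Ader f x h Θ l m).1).prod ((Ader f x h Θ l m).2)) (Θ l) := by
  intro m
  induction m with
  | zero =>
      simp only [leapPair, Ader]
      refine HasFDerivAt.prodMk (hasFDerivAt_const x (Θ l)) ?_
      by_cases hl : l = 0
      · subst hl
        simp only [Function.update_self, if_pos rfl]
        have hdiff : DifferentiableAt ℝ (fun v => f (x, v)) (Θ 0) :=
          ((hf.differentiable one_ne_zero) (x, Θ 0)).comp (Θ 0)
            ((differentiableAt_const x).prodMk differentiableAt_id)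
        exact (hdiff.hasFDerivAt.const_smul h).const_add x
      · simp only [Function.update_of_ne (Ne.symm hl), if_neg hl]
        exact hasFDerivAt_const _ (Θ l)
  | succ m IH =>
      simp only [leapPair]
      refine HasFDerivAt.prodMk ?_ ?_
      · have := IH.snd
        rwa [ContinuousLinearMap.snd_comp_prod] at this
      · -- second component
        have hC : HasFDerivAt (fun v => Function.update Θ l v (m + 1))
            (if l = m + 1 then ContinuousLinearMap.id ℝ (EuclideanSpace ℝ (Fin n)) else 0) (Θ l) := by
          by_cases hl : l = m + 1
          · subst hl
            simp only [Function.update_self, if_pos rfl]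
            exact hasFDerivAt_id _
          · simp only [Function.update_of_ne (fun hx => hl hx.symm), if_neg hl]
            exact hasFDerivAt_const _ (Θ l)
        have hq : HasFDerivAt
            (fun v => ((leapPair f x h (Function.update Θ l v) m).2, Function.update Θ l v (m + 1)))
            (((Ader f x h Θ l m).2).prod
              (if l = m + 1 then ContinuousLinearMap.id ℝ (EuclideanSpace ℝ (Fin n)) else 0)) (Θ l) := by
          refine HasFDerivAt.prodMk ?_ hC
          have := IH.snd
          rwa [ContinuousLinearMap.snd_comp_prod] at this
        have hpt : ((leapPair f x h (Function.update Θ l (Θ l)) m).2, Function.update Θ l (Θ l) (m + 1))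
            = ((leapPair f x h Θ m).2, Θ (m + 1)) := by
          rw [Function.update_eq_self]
        have hF : HasFDerivAt f
            (fderiv ℝ f ((leapPair f x h Θ m).2, Θ (m + 1)))
            ((fun v => ((leapPair f x h (Function.update Θ l v) m).2, Function.update Θ l v (m + 1))) (Θ l)) := by
          simp only [hpt]
          exact ((hf.differentiable one_ne_zero) _).hasFDerivAt
        have hcomp := hF.comp (Θ l) hq
        rw [fderiv_comp_prod hf] at hcomp
        have hsmul := hcomp.const_smul ((2 : ℝ) * h)
        have hfst : HasFDerivAt (fun v => (leapPair f x h (Function.update Θ l v) m).1)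
            ((Ader f x h Θ l m).1) (Θ l) := by
          have := IH.fst
          rwa [ContinuousLinearMap.fst_comp_prod] at this
        have hfin := hfst.add hsmul
        have hite : (jacTh f ((leapPair f x h Θ m).2) (Θ (m + 1))).comp
              (if l = m + 1 then ContinuousLinearMap.id ℝ (EuclideanSpace ℝ (Fin n)) else 0)
            = if l = m + 1 then jacTh f (leap f x h Θ (m + 1)) (Θ (m + 1)) else 0 := by
          by_cases hl : l = m + 1 <;>
            simp [hl, ContinuousLinearMap.comp_zero, leap, leapPair]
        rw [hite] at hfin
        exact hfin

lemma Ader_lt_zero {d n : ℕ}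
    (f : EuclideanSpace ℝ (Fin d) × EuclideanSpace ℝ (Fin n) → EuclideanSpace ℝ (Fin d))
    (x : EuclideanSpace ℝ (Fin d)) (h : ℝ) (Θ : ℕ → EuclideanSpace ℝ (Fin n)) (l : ℕ) :
    ∀ m, m < l → Ader f x h Θ l m = 0 := by
  intro m
  induction m with
  | zero => intro hm; simp only [Ader, if_neg (by omega : ¬ l = 0)]; rfl
  | succ m IH =>
      intro hm
      have h0 := IH (by omega)
      simp [Ader, h0, if_neg (by omega : ¬ l = m + 1), Prod.ext_iff]
      exact smul_zero (A := EuclideanSpace ℝ (Fin n) →L[ℝ] EuclideanSpace ℝ (Fin d)) ((2 : ℝ) * h)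

lemma Ader_at_l {d n : ℕ}
    (f : EuclideanSpace ℝ (Fin d) × EuclideanSpace ℝ (Fin n) → EuclideanSpace ℝ (Fin d))
    (x : EuclideanSpace ℝ (Fin d)) (h : ℝ) (Θ : ℕ → EuclideanSpace ℝ (Fin n)) (l : ℕ) :
    (Ader f x h Θ l l).2 = (if l = 0 then h else 2 * h) • jacTh f (leap f x h Θ l) (Θ l) := by
  cases l with
  | zero => simp [Ader]; rfl
  | succ k =>
      have h0 := Ader_lt_zero f x h Θ (k + 1) k (by omega)
      simp [Ader, h0, if_pos rfl]

set_option maxHeartbeats 2000000 in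
/-- Auto-differentiation of the Leapfrog-network loss: for every
layer `l`, `L ∂_{θ_l} E = p_lᵀ ∂_θ f(z_l, θ_l)`, where `p` is the back-propagator. -/
theorem leapfrog_autodiff_gradient {d n : ℕ} (L : ℕ) (hL : 4 ≤ L)
    (f : EuclideanSpace ℝ (Fin d) × EuclideanSpace ℝ (Fin n) → EuclideanSpace ℝ (Fin d))
    (g : EuclideanSpace ℝ (Fin d) → ℝ)
    (hf : ContDiff ℝ 1 f) (hg : ContDiff ℝ 1 g)
    (x : EuclideanSpace ℝ (Fin d)) (y : ℝ)
    (Θ : ℕ → EuclideanSpace ℝ (Fin n))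
    (h : ℝ) (hh : h = 1 / (L : ℝ))
    (p : ℕ → EuclideanSpace ℝ (Fin d))
    (hpL1 : p (L - 1) =
      (2 * (g (leap f x h Θ L) - y)) • gradient g (leap f x h Θ L))
    (hpL2 : p (L - 2) =
      (2 * h) • (ContinuousLinearMap.adjoint
        (jacZ f (leap f x h Θ (L - 1)) (Θ (L - 1)))) (p (L - 1)))
    (hpl : ∀ l, 1 ≤ l → l + 3 ≤ L → p l =
      p (l + 2) + (2 * h) • (ContinuousLinearMap.adjoint
        (jacZ f (leap f x h Θ (l + 1)) (Θ (l + 1)))) (p (l + 1)))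
    (hp0 : p 0 = (1 / 2 : ℝ) • p 2 + h • (ContinuousLinearMap.adjoint
        (jacZ f (leap f x h Θ 1) (Θ 1))) (p 1)) :
    ∀ l < L,
      (L : ℝ) • gradient
          (fun v => (1 / 2 : ℝ) * (g (leap f x h (Function.update Θ l v) L) - y) ^ 2) (Θ l)
        = (ContinuousLinearMap.adjoint (jacTh f (leap f x h Θ l) (Θ l))) (p l) := by
  obtain ⟨K, rfl⟩ : ∃ K, L = K + 4 := ⟨L - 4, by omega⟩
  rw [(by omega : K + 4 - 1 = K + 3)] at hpL1 hpL2
  rw [(by omega : K + 4 - 2 = K + 2)] at hpL2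
  intro l hlL
  -- the invariant step
  have hΦstep : ∀ m, l ≤ m → 1 ≤ m → m + 3 ≤ K + 4 →
      ContinuousLinearMap.adjoint (Ader f x h Θ l (m + 1)).2 (p (m + 1))
        + ContinuousLinearMap.adjoint (Ader f x h Θ l (m + 1)).1 (p (m + 2))
      = ContinuousLinearMap.adjoint (Ader f x h Θ l m).2 (p m)
        + ContinuousLinearMap.adjoint (Ader f x h Θ l m).1 (p (m + 1)) := by
    intro m hm1 hm2 hm3
    have hrec := hpl m hm2 hm3
    have eA2 : (Ader f x h Θ l (m + 1)).2 = (Ader f x h Θ l m).1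
        + (2 * h) • ((jacZ f (leap f x h Θ (m + 1)) (Θ (m + 1))).comp (Ader f x h Θ l m).2) := by
      show (Ader f x h Θ l m).1 + (2 * h) • (_ + _) = _
      rw [if_neg (by omega : ¬ l = m + 1), add_zero]
    have eA1 : (Ader f x h Θ l (m + 1)).1 = (Ader f x h Θ l m).2 := rfl
    rw [eA1, eA2, hrec]
    simp only [map_add, map_smulₛₗ, starRingEnd_apply, star_trivial,
      ContinuousLinearMap.adjoint_comp, ContinuousLinearMap.add_apply,
      ContinuousLinearMap.smul_apply, ContinuousLinearMap.comp_apply, map_smul, RingHom.id_apply]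
    abel
  -- the invariant chain
  have hchain : ∀ t j, j + t = K + 2 → l ≤ j → 1 ≤ j →
      ContinuousLinearMap.adjoint (Ader f x h Θ l (K + 2)).2 (p (K + 2))
        + ContinuousLinearMap.adjoint (Ader f x h Θ l (K + 2)).1 (p (K + 3))
      = ContinuousLinearMap.adjoint (Ader f x h Θ l j).2 (p j)
        + ContinuousLinearMap.adjoint (Ader f x h Θ l j).1 (p (j + 1)) := by
    intro t
    induction t with
    | zero =>
        intro j hj _ _
        obtain rfl : j = K + 2 := by omega
        rfl
    | succ t IH =>
        intro j hj hjl hj1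
        have hstep := hΦstep j hjl hj1 (by omega)
        have h2 := IH (j + 1) (by omega) (by omega) (by omega)
        rw [h2]
        exact hstep
  -- the key adjoint identity
  have key : ContinuousLinearMap.adjoint (Ader f x h Θ l (K + 3)).2 (p (K + 3))
      = (2 * h) • ContinuousLinearMap.adjoint (jacTh f (leap f x h Θ l) (Θ l)) (p l) := by
    by_cases hl3 : l = K + 3
    · subst hl3
      rw [Ader_at_l f x h Θ (K + 3), if_neg (by omega)]
      simp [map_smulₛₗ]
    · have hlK2 : l ≤ K + 2 := by omega
      have etop : (Ader f x h Θ l (K + 3)).2 = (Ader f x h Θ l (K + 2)).1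
          + (2 * h) • ((jacZ f (leap f x h Θ (K + 3)) (Θ (K + 3))).comp (Ader f x h Θ l (K + 2)).2) := by
        show (Ader f x h Θ l (K + 2)).1 + (2 * h) • (_ + _) = _
        rw [if_neg (by omega : ¬ l = K + 2 + 1), add_zero]
      have hgoal1 : ContinuousLinearMap.adjoint (Ader f x h Θ l (K + 3)).2 (p (K + 3))
          = ContinuousLinearMap.adjoint (Ader f x h Θ l (K + 2)).2 (p (K + 2))
            + ContinuousLinearMap.adjoint (Ader f x h Θ l (K + 2)).1 (p (K + 3)) := by
        rw [etop, hpL2]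
        simp only [map_add, map_smulₛₗ, starRingEnd_apply, star_trivial,
          ContinuousLinearMap.adjoint_comp, ContinuousLinearMap.add_apply,
          ContinuousLinearMap.smul_apply, ContinuousLinearMap.comp_apply, map_smul, RingHom.id_apply]
        abel
      by_cases hl0 : l = 0
      · subst hl0
        have hch := hchain (K + 1) 1 (by omega) (by omega) (by omega)
        have eB1 : (Ader f x h Θ 0 1).1 = h • jacTh f x (Θ 0) := by
          show (Ader f x h Θ 0 0).2 = _
          simp [Ader]
        have eB2 : (Ader f x h Θ 0 1).2
            = (2 * h) • ((jacZ f (leap f x h Θ 1) (Θ 1)).comp (h • jacTh f x (Θ 0))) := by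
          simp [Ader]
        rw [hgoal1, hch, eB1, eB2, hp0]
        have eleap0 : leap f x h Θ 0 = x := rfl
        rw [eleap0]
        simp only [map_add, map_smulₛₗ, starRingEnd_apply, star_trivial,
          ContinuousLinearMap.adjoint_comp, ContinuousLinearMap.add_apply,
          ContinuousLinearMap.smul_apply, ContinuousLinearMap.comp_apply, map_smul, RingHom.id_apply]
        module
      · obtain ⟨k, rfl⟩ : ∃ k, l = k + 1 := ⟨l - 1, by omega⟩
        have hch := hchain (K + 2 - (k + 1)) (k + 1) (by omega) (le_refl _) (by omega)
        have eB1 : (Ader f x h Θ (k + 1) (k + 1)).1 = 0 := by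
          show (Ader f x h Θ (k + 1) k).2 = 0
          rw [Ader_lt_zero f x h Θ (k + 1) k (by omega)]
          rfl
        rw [hgoal1, hch, eB1, Ader_at_l f x h Θ (k + 1), if_neg (by omega)]
        simp [map_smulₛₗ]
  -- derivative of the network output with respect to θ_l
  have hzder : HasFDerivAt (fun v => leap f x h (Function.update Θ l v) (K + 4))
      ((Ader f x h Θ l (K + 3)).2) (Θ l) := by
    have hfst := (leapPair_hasFDerivAt hf x h Θ l (K + 4)).fst
    rw [ContinuousLinearMap.fst_comp_prod] at hfst
    exact hfst
  have hgd : HasFDerivAt g (fderiv ℝ g (leap f x h Θ (K + 4)))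
      (leap f x h (Function.update Θ l (Θ l)) (K + 4)) := by
    rw [Function.update_eq_self]
    exact ((hg.differentiable one_ne_zero) _).hasFDerivAt
  have hcomp : HasFDerivAt (fun v => g (leap f x h (Function.update Θ l v) (K + 4)))
      ((fderiv ℝ g (leap f x h Θ (K + 4))).comp ((Ader f x h Θ l (K + 3)).2)) (Θ l) :=
    hgd.comp (Θ l) hzder
  have hu : HasFDerivAt (fun v => g (leap f x h (Function.update Θ l v) (K + 4)) - y)
      ((fderiv ℝ g (leap f x h Θ (K + 4))).comp ((Ader f x h Θ l (K + 3)).2)) (Θ l) :=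
    hcomp.sub_const y
  have hEder := (hu.mul hu).const_mul (1 / 2 : ℝ)
  -- identify the derivative with the claimed gradient
  have hD : (InnerProductSpace.toDual ℝ (EuclideanSpace ℝ (Fin n))
        (h • ContinuousLinearMap.adjoint (jacTh f (leap f x h Θ l) (Θ l)) (p l))
        : EuclideanSpace ℝ (Fin n) →L[ℝ] ℝ)
      = (1 / 2 : ℝ) •
          ((g (leap f x h (Function.update Θ l (Θ l)) (K + 4)) - y) •
              ((fderiv ℝ g (leap f x h Θ (K + 4))).comp ((Ader f x h Θ l (K + 3)).2))
            + (g (leap f x h (Function.update Θ l (Θ l)) (K + 4)) - y) •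
              ((fderiv ℝ g (leap f x h Θ (K + 4))).comp ((Ader f x h Θ l (K + 3)).2))) := by
    ext w
    have hkey := congrArg (fun u => (inner ℝ u w : ℝ)) key
    simp only [ContinuousLinearMap.adjoint_inner_left, real_inner_smul_left] at hkey
    rw [hpL1] at hkey
    rw [real_inner_smul_left] at hkey
    have hgradg : (InnerProductSpace.toDual ℝ (EuclideanSpace ℝ (Fin d)))
        (gradient g (leap f x h Θ (K + 4))) = fderiv ℝ g (leap f x h Θ (K + 4)) := by
      simp [gradient]
    have hXw : (fderiv ℝ g (leap f x h Θ (K + 4)))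
          ((Ader f x h Θ l (K + 3)).2 w)
        = inner ℝ (gradient g (leap f x h Θ (K + 4))) ((Ader f x h Θ l (K + 3)).2 w) := by
      rw [← hgradg, InnerProductSpace.toDual_apply_apply]
    rw [Function.update_eq_self]
    simp only [InnerProductSpace.toDual_apply_apply, real_inner_smul_left,
      ContinuousLinearMap.adjoint_inner_left, ContinuousLinearMap.smul_apply,
      ContinuousLinearMap.add_apply, ContinuousLinearMap.comp_apply, smul_eq_mul]
    rw [hXw]
    linear_combination (-1 / 2 : ℝ) * hkey
  have hgradE : HasGradientAt
      (fun v => (1 / 2 : ℝ) * (g (leap f x h (Function.update Θ l v) (K + 4)) - y) ^ 2)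
      (h • ContinuousLinearMap.adjoint (jacTh f (leap f x h Θ l) (Θ l)) (p l)) (Θ l) := by
    rw [hasGradientAt_iff_hasFDerivAt, hD]
    have heq : (fun v => (1 / 2 : ℝ) * (g (leap f x h (Function.update Θ l v) (K + 4)) - y) ^ 2)
        = fun v => (1 / 2 : ℝ) * ((g (leap f x h (Function.update Θ l v) (K + 4)) - y) *
            (g (leap f x h (Function.update Θ l v) (K + 4)) - y)) := by
      funext v
      ring
    rw [heq]
    exact hEder
  rw [hgradE.gradient, smul_smul, hh]
  have hK0 : ((K + 4 : ℕ) : ℝ) ≠ 0 := by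
    exact_mod_cast (by omega : (K + 4 : ℕ) ≠ 0)
  rw [mul_one_div, div_self hK0, one_smul]
end
end

section
/- Let f : ℝ^d × ℝ^n → ℝ^d be continuously differentiable, g : ℝ^d → ℝ continuously differentiable, x ∈ ℝ^d, y ∈ ℝ, and θ, δθ : [0,1] → ℝ^n continuous. Suppose z : ℝ × [0,1] → ℝ^d is continuously differentiable, satisfies ∂_t z(ε,t) = f(z(ε,t), θ(t) + ε δθ(t)) and z(ε,0) = x for all ε in a neighborhood of 0 and t ∈ [0,1], and that ∂_ε z exists and is continuous. Let p : [0,1] → ℝ^d solve the adjoint equation −p'(t)ᵀ = p(t)ᵀ ∂_z f(z(0,t), θ(t)) with final condition p(1)ᵀ = (g(z(0,1)) − y)∇g(z(0,1))ᵀ. Then the derivative at ε = 0 of the loss Ẽ(ε) = (1/2)|g(z(ε,1)) − y|² equals ∫₀¹ p(t)ᵀ ∂_θ f(z(0,t), θ(t)) δθ(t) dt. -/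
noncomputable section

section aux
open Set ContinuousLinearMap

variable {d n : ℕ}
local notation "E" => EuclideanSpace ℝ (Fin d)
local notation "P" => EuclideanSpace ℝ (Fin n)

lemma jacZ_eq {f : E × P → E} (hf : ContDiff ℝ 1 f) (a : E) (b : P) :
    jacZ f a b = (fderiv ℝ f (a, b)).comp ((ContinuousLinearMap.id ℝ E).prod 0) := by
  have hd := (hf.differentiable one_ne_zero (a, b)).hasFDerivAt
  exact (hd.comp a ((hasFDerivAt_id a).prodMk (hasFDerivAt_const b a))).fderiv

lemma jacTh_eq {f : E × P → E} (hf : ContDiff ℝ 1 f) (a : E) (b : P) :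
    jacTh f a b = (fderiv ℝ f (a, b)).comp ((0 : P →L[ℝ] E).prod (ContinuousLinearMap.id ℝ P)) := by
  have hd := (hf.differentiable one_ne_zero (a, b)).hasFDerivAt
  exact (hd.comp b ((hasFDerivAt_const a b).prodMk (hasFDerivAt_id b))).fderiv

lemma jac_split {f : E × P → E} (hf : ContDiff ℝ 1 f) (a : E) (b : P) (u : E) (w : P) :
    fderiv ℝ f (a, b) (u, w) = jacZ f a b u + jacTh f a b w := by
  rw [jacZ_eq hf, jacTh_eq hf]
  have h : (u, w) = ((u, (0 : P)) + ((0 : E), w)) := by simp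
  rw [h, map_add]
  simp

end aux

open Set in
/-- Adjoint-state formula: the derivative at `ε = 0` of the perturbed
continuous loss `Ẽ(ε) = ½|g(z(ε,1)) − y|²` equals
`∫₀¹ p(t)ᵀ ∂_θ f(z(0,t), θ(t)) δθ(t) dt`. -/
theorem continuous_adjoint_functional_derivative {d n : ℕ}
    (f : EuclideanSpace ℝ (Fin d) × EuclideanSpace ℝ (Fin n) → EuclideanSpace ℝ (Fin d))
    (g : EuclideanSpace ℝ (Fin d) → ℝ)
    (x : EuclideanSpace ℝ (Fin d)) (y : ℝ)
    (θ δθ : ℝ → EuclideanSpace ℝ (Fin n))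
    (z : ℝ → ℝ → EuclideanSpace ℝ (Fin d))
    (p : ℝ → EuclideanSpace ℝ (Fin d))
    (hf : ContDiff ℝ 1 f) (hg : ContDiff ℝ 1 g)
    (hθ : ContinuousOn θ (Icc 0 1)) (hδθ : ContinuousOn δθ (Icc 0 1))
    (hz : ContDiff ℝ 1 (Function.uncurry z))
    (hode : ∀ᶠ ε in nhds (0 : ℝ), z ε 0 = x ∧
      ∀ t ∈ Icc (0 : ℝ) 1, HasDerivAt (fun s => z ε s) (f (z ε t, θ t + ε • δθ t)) t)
    (hp : ∀ t ∈ Icc (0 : ℝ) 1, HasDerivAt p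
      (-(ContinuousLinearMap.adjoint (jacZ f (z 0 t) (θ t))) (p t)) t)
    (hp1 : p 1 = (g (z 0 1) - y) • gradient g (z 0 1)) :
    HasDerivAt (fun ε => (1 / 2 : ℝ) * (g (z ε 1) - y) ^ 2)
      (∫ t in (0 : ℝ)..1,
        (inner ℝ ((ContinuousLinearMap.adjoint (jacTh f (z 0 t) (θ t))) (p t)) (δθ t) : ℝ))
      0 := by
  -- basic continuity facts
  have hzc : Continuous (Function.uncurry z) := hz.continuous
  have hzd : Differentiable ℝ (Function.uncurry z) := hz.differentiable one_ne_zero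
  have hDz : Continuous (fderiv ℝ (Function.uncurry z)) := hz.continuous_fderiv one_ne_zero
  have hDf : Continuous (fderiv ℝ f) := hf.continuous_fderiv one_ne_zero
  -- the perturbation direction in the state
  set v : ℝ → ℝ → EuclideanSpace ℝ (Fin d) :=
    fun ε t => fderiv ℝ (Function.uncurry z) (ε, t) (1, 0) with hv
  -- partial derivative of z in ε
  have hvd : ∀ ε t : ℝ, HasDerivAt (fun e => z e t) (v ε t) ε := by
    intro ε t
    have hps : HasDerivAt (fun e : ℝ => (e, t)) ((1 : ℝ), (0 : ℝ)) ε :=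
      (hasDerivAt_id ε).prodMk (hasDerivAt_const ε t)
    exact (hzd (ε, t)).hasFDerivAt.comp_hasDerivAt ε hps
  have hvc : Continuous fun q : ℝ × ℝ => v q.1 q.2 := by
    exact (hDz.comp (continuous_fst.prodMk continuous_snd)).clm_apply continuous_const
  have hv0c : Continuous fun t => v 0 t :=
    hvc.comp (continuous_const.prodMk continuous_id)
  -- the perturbed field and its ε-derivative
  set F : ℝ → ℝ → EuclideanSpace ℝ (Fin d) :=
    fun ε s => f (z ε s, θ s + ε • δθ s) with hF
  set F' : ℝ → ℝ → EuclideanSpace ℝ (Fin d) :=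
    fun ε s => fderiv ℝ f (z ε s, θ s + ε • δθ s) (v ε s, δθ s) with hF'
  have hzc2 : ∀ ε : ℝ, Continuous fun s => z ε s := by
    intro ε; exact hzc.comp (continuous_const.prodMk continuous_id)
  have hθε : ∀ ε : ℝ, ContinuousOn (fun s => θ s + ε • δθ s) (Icc 0 1) :=
    fun ε => hθ.add (hδθ.const_smul ε)
  have hFc : ∀ ε : ℝ, ContinuousOn (F ε) (Icc 0 1) := by
    intro ε
    exact hf.continuous.comp_continuousOn (((hzc2 ε).continuousOn).prodMk (hθε ε))
  have hFd : ∀ (ε s : ℝ), HasDerivAt (fun e => F e s) (F' ε s) ε := by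
    intro ε s
    have h1 : HasDerivAt (fun e => z e s) (v ε s) ε := hvd ε s
    have h2 : HasDerivAt (fun e : ℝ => θ s + e • δθ s) (δθ s) ε := by
      have := ((hasDerivAt_id ε).smul_const (δθ s)).const_add (θ s)
      simpa using this
    exact (hf.differentiable one_ne_zero _).hasFDerivAt.comp_hasDerivAt ε (h1.prodMk h2)
  -- uniform bound for F' on ball 0 1 × Icc 0 1
  obtain ⟨C, hC⟩ : ∃ C, ∀ q ∈ (Metric.closedBall (0:ℝ) 1) ×ˢ (Icc (0:ℝ) 1),
      ‖F' q.1 q.2‖ ≤ C := by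
    have hK : IsCompact ((Metric.closedBall (0:ℝ) 1) ×ˢ (Icc (0:ℝ) 1)) :=
      (isCompact_closedBall 0 1).prod isCompact_Icc
    apply hK.exists_bound_of_continuousOn
    have hc1 : Continuous fun q : ℝ × ℝ => z q.1 q.2 := hzc
    have hc2 : ContinuousOn (fun q : ℝ × ℝ => θ q.2 + q.1 • δθ q.2)
        ((Metric.closedBall (0:ℝ) 1) ×ˢ (Icc (0:ℝ) 1)) := by
      have hsub : MapsTo (fun q : ℝ × ℝ => q.2)
          ((Metric.closedBall (0:ℝ) 1) ×ˢ (Icc (0:ℝ) 1)) (Icc 0 1) :=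
        fun q hq => hq.2
      exact (hθ.comp continuous_snd.continuousOn hsub).add
        (continuous_fst.continuousOn.smul (hδθ.comp continuous_snd.continuousOn hsub))
    have hc3 : ContinuousOn (fun q : ℝ × ℝ => δθ q.2)
        ((Metric.closedBall (0:ℝ) 1) ×ˢ (Icc (0:ℝ) 1)) :=
      hδθ.comp continuous_snd.continuousOn (fun q hq => hq.2)
    exact ((hDf.comp_continuousOn (hc1.continuousOn.prodMk hc2)).clm_apply
      ((hvc.continuousOn).prodMk hc3))
  -- the local solution hypothesis on a ball
  obtain ⟨r, hr, hball⟩ := Metric.eventually_nhds_iff_ball.mp hode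
  -- FTC representation of z
  have hrep : ∀ ε ∈ Metric.ball (0:ℝ) r, ∀ t ∈ Icc (0:ℝ) 1,
      z ε t = x + ∫ s in (0:ℝ)..t, F ε s := by
    intro ε hε t ht
    have hsub : uIcc (0:ℝ) t ⊆ Icc 0 1 := by
      rw [uIcc_of_le ht.1]; exact Icc_subset_Icc_right ht.2
    have hderiv : ∀ s ∈ uIcc (0:ℝ) t, HasDerivAt (fun u => z ε u) (F ε s) s :=
      fun s hs => (hball ε hε).2 s (hsub hs)
    have hint : IntervalIntegrable (F ε) MeasureTheory.volume 0 t :=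
      ((hFc ε).mono hsub).intervalIntegrable
    have := intervalIntegral.integral_eq_sub_of_hasDerivAt hderiv hint
    rw [this, (hball ε hε).1]
    abel
  -- integral representation of v 0
  have hveq : ∀ t ∈ Icc (0:ℝ) 1, v 0 t = ∫ s in (0:ℝ)..t, F' 0 s := by
    intro t ht
    have hsubI : uIcc (0:ℝ) t ⊆ Icc 0 1 := by
      rw [uIcc_of_le ht.1]; exact Icc_subset_Icc_right ht.2
    have hsub : uIoc (0:ℝ) t ⊆ Icc 0 1 := by
      rw [uIoc_of_le ht.1]
      exact (Ioc_subset_Icc_self).trans (Icc_subset_Icc_right ht.2)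
    have hF'c : ContinuousOn (F' 0) (Icc 0 1) := by
      have := ((hDf.comp_continuousOn
        (((hzc2 0).continuousOn).prodMk (hθε 0))).clm_apply
        ((hv0c.continuousOn).prodMk hδθ))
      exact this
    have hF'meas : MeasureTheory.AEStronglyMeasurable (F' 0)
        (MeasureTheory.volume.restrict (uIoc (0:ℝ) t)) :=
      (hF'c.mono hsub).aestronglyMeasurable measurableSet_uIoc
    have hbound : ∀ᵐ s ∂(MeasureTheory.volume), s ∈ uIoc (0:ℝ) t →
        ∀ ε ∈ Metric.ball (0:ℝ) 1, ‖F' ε s‖ ≤ C := by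
      refine MeasureTheory.ae_of_all _ fun s hs ε hε => ?_
      exact hC (ε, s) ⟨Metric.ball_subset_closedBall hε, hsub hs⟩
    have hdiff : ∀ᵐ s ∂(MeasureTheory.volume), s ∈ uIoc (0:ℝ) t →
        ∀ ε ∈ Metric.ball (0:ℝ) 1, HasDerivAt (fun e => F e s) (F' ε s) ε :=
      MeasureTheory.ae_of_all _ fun s _ ε _ => hFd ε s
    have hmain := (intervalIntegral.hasDerivAt_integral_of_dominated_loc_of_deriv_le
      (F := F) (F' := F') (x₀ := (0:ℝ)) (a := (0:ℝ)) (b := t)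
      (bound := fun _ => C) (μ := MeasureTheory.volume) (Metric.ball_mem_nhds (0:ℝ) one_pos)
      (Filter.Eventually.of_forall fun ε =>
        (((hFc ε).mono hsub).aestronglyMeasurable measurableSet_uIoc))
      (((hFc 0).mono hsubI).intervalIntegrable)
      hF'meas hbound intervalIntegrable_const hdiff).2
    -- z ε t = x + ∫ F ε  near 0, and ε ↦ z ε t has derivative v 0 t
    have hcongr : (fun ε => z ε t) =ᶠ[nhds (0:ℝ)] fun ε => x + ∫ s in (0:ℝ)..t, F ε s := by
      filter_upwards [Metric.ball_mem_nhds (0:ℝ) hr] with ε hε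
      exact hrep ε hε t ht
    have h2 : HasDerivAt (fun ε => z ε t) (∫ s in (0:ℝ)..t, F' 0 s) 0 :=
      (hmain.const_add x).congr_of_eventuallyEq hcongr
    exact (hvd 0 t).unique h2
  -- the linearized vector field
  set G : ℝ → EuclideanSpace ℝ (Fin d) :=
    fun s => jacZ f (z 0 s) (θ s) (v 0 s) + jacTh f (z 0 s) (θ s) (δθ s) with hG
  have hF'0 : ∀ s : ℝ, F' 0 s = G s := by
    intro s
    have h0 : θ s + (0:ℝ) • δθ s = θ s := by simp
    simp only [hF', hG, h0]
    exact jac_split hf _ _ _ _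
  have hvG : ∀ t ∈ Icc (0:ℝ) 1, v 0 t = ∫ s in (0:ℝ)..t, G s := by
    intro t ht
    rw [hveq t ht]
    simp only [hF'0]
  -- continuity of the coefficient operators
  have hpairc : ContinuousOn (fun t => (z 0 t, θ t)) (Icc (0:ℝ) 1) :=
    ((hzc2 0).continuousOn).prodMk hθ
  have hAc : ContinuousOn (fun t => jacZ f (z 0 t) (θ t)) (Icc (0:ℝ) 1) := by
    have heq : (fun t => jacZ f (z 0 t) (θ t)) = fun t =>
        (fderiv ℝ f (z 0 t, θ t)).comp
          ((ContinuousLinearMap.id ℝ (EuclideanSpace ℝ (Fin d))).prod 0) := by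
      funext t; exact jacZ_eq hf _ _
    rw [heq]
    exact (hDf.comp_continuousOn hpairc).clm_comp continuousOn_const
  have hBc : ContinuousOn (fun t => jacTh f (z 0 t) (θ t)) (Icc (0:ℝ) 1) := by
    have heq : (fun t => jacTh f (z 0 t) (θ t)) = fun t =>
        (fderiv ℝ f (z 0 t, θ t)).comp
          ((0 : EuclideanSpace ℝ (Fin n) →L[ℝ] EuclideanSpace ℝ (Fin d)).prod
            (ContinuousLinearMap.id ℝ (EuclideanSpace ℝ (Fin n)))) := by
      funext t; exact jacTh_eq hf _ _
    rw [heq]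
    exact (hDf.comp_continuousOn hpairc).clm_comp continuousOn_const
  have hGc : ContinuousOn G (Icc (0:ℝ) 1) :=
    (hAc.clm_apply hv0c.continuousOn).add (hBc.clm_apply hδθ)
  have hpc : ContinuousOn p (Icc (0:ℝ) 1) :=
    fun t ht => (hp t ht).continuousAt.continuousWithinAt
  -- derivative of v 0 in time on the interior
  have hv0d : ∀ t ∈ Ioo (0:ℝ) 1, HasDerivAt (fun u => v 0 u) (G t) t := by
    intro t ht
    have ht' : t ∈ Icc (0:ℝ) 1 := Ioo_subset_Icc_self ht
    have hsubI : uIcc (0:ℝ) t ⊆ Icc 0 1 := by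
      rw [uIcc_of_le ht'.1]; exact Icc_subset_Icc_right ht'.2
    have hint : IntervalIntegrable G MeasureTheory.volume 0 t :=
      (hGc.mono hsubI).intervalIntegrable
    have hmeas : StronglyMeasurableAtFilter G (nhds t) MeasureTheory.volume :=
      ⟨Ioo 0 1, Ioo_mem_nhds ht.1 ht.2,
        (hGc.mono Ioo_subset_Icc_self).aestronglyMeasurable measurableSet_Ioo⟩
    have hct : ContinuousAt G t := hGc.continuousAt (Icc_mem_nhds ht.1 ht.2)
    have hI : HasDerivAt (fun u => ∫ s in (0:ℝ)..u, G s) (G t) t :=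
      intervalIntegral.integral_hasDerivAt_right hint hmeas hct
    refine hI.congr_of_eventuallyEq ?_
    filter_upwards [Icc_mem_nhds ht.1 ht.2] with u hu
    exact hvG u hu
  -- derivative of the pairing
  have hφd : ∀ t ∈ Ioo (0:ℝ) 1,
      HasDerivAt (fun u => (inner ℝ (p u) (v 0 u) : ℝ))
        ((inner ℝ (p t) (jacTh f (z 0 t) (θ t) (δθ t)) : ℝ)) t := by
    intro t ht
    have ht' : t ∈ Icc (0:ℝ) 1 := Ioo_subset_Icc_self ht
    have h := HasDerivAt.inner (𝕜 := ℝ) (hp t ht') (hv0d t ht)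
    have heq : (inner ℝ (p t) (G t) : ℝ)
        + inner ℝ (-(ContinuousLinearMap.adjoint (jacZ f (z 0 t) (θ t))) (p t)) (v 0 t)
        = (inner ℝ (p t) (jacTh f (z 0 t) (θ t) (δθ t)) : ℝ) := by
      simp only [hG, inner_add_right, inner_neg_left,
        ContinuousLinearMap.adjoint_inner_left]
      ring
    rw [heq] at h
    exact h
  -- FTC for the pairing
  have hφcont : ContinuousOn (fun u => (inner ℝ (p u) (v 0 u) : ℝ)) (Icc (0:ℝ) 1) :=
    hpc.inner (hv0c.continuousOn)
  have hKint : IntervalIntegrable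
      (fun t => (inner ℝ (p t) (jacTh f (z 0 t) (θ t) (δθ t)) : ℝ))
      MeasureTheory.volume 0 1 := by
    apply ContinuousOn.intervalIntegrable
    rw [uIcc_of_le zero_le_one]
    exact hpc.inner (hBc.clm_apply hδθ)
  have hFTC := intervalIntegral.integral_eq_sub_of_hasDerivAt_of_le
    zero_le_one hφcont hφd hKint
  -- the initial perturbation vanishes
  have hv00 : v 0 0 = 0 := by
    have h2 : HasDerivAt (fun ε => z ε 0) 0 0 := by
      have hev : (fun ε : ℝ => z ε 0) =ᶠ[nhds 0] fun _ => x := by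
        filter_upwards [hode] with ε hε using hε.1
      exact (hasDerivAt_const (0:ℝ) x).congr_of_eventuallyEq hev
    exact (hvd 0 0).unique h2
  -- value of the pairing at time 1
  have hgrad : (inner ℝ (gradient g (z 0 1)) (v 0 1) : ℝ) = fderiv ℝ g (z 0 1) (v 0 1) := by
    rw [← InnerProductSpace.toDual_apply_apply]
    unfold gradient
    rw [LinearIsometryEquiv.apply_symm_apply]
  have key : (∫ t in (0:ℝ)..1,
      (inner ℝ (p t) (jacTh f (z 0 t) (θ t) (δθ t)) : ℝ))
      = (g (z 0 1) - y) * fderiv ℝ g (z 0 1) (v 0 1) := by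
    rw [hFTC, hv00, hp1, inner_zero_right, sub_zero, real_inner_smul_left, hgrad]
  -- chain rule for the loss
  have hz1 : HasDerivAt (fun ε => z ε 1) (v 0 1) 0 := hvd 0 1
  have hg1 : HasDerivAt (fun ε => g (z ε 1)) (fderiv ℝ g (z 0 1) (v 0 1)) 0 :=
    (hg.differentiable one_ne_zero _).hasFDerivAt.comp_hasDerivAt 0 hz1
  have hfinal : HasDerivAt (fun ε => (1 / 2 : ℝ) * (g (z ε 1) - y) ^ 2)
      ((1 / 2 : ℝ) * (((2 : ℕ) : ℝ) * (g (z 0 1) - y) ^ (2 - 1) * fderiv ℝ g (z 0 1) (v 0 1))) 0 :=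
    ((hg1.sub_const y).pow 2).const_mul (1/2 : ℝ)
  simp only [ContinuousLinearMap.adjoint_inner_left]
  rw [key]
  convert hfinal using 1
  ring
end
end

section
/- Let f : ℝ^d × ℝ^n → ℝ^d be twice continuously differentiable with bounded first and second derivatives, and let θ : [0,1] → ℝ^n be twice continuously differentiable with bounded second derivative. Fix x ∈ ℝ^d. Let z : [0,1] → ℝ^d solve z'(t) = f(z(t), θ(t)) with z(0) = x. For each integer L ≥ 2, set h = 1/L, θ_l = θ(lh), and define the Leapfrog iterates z_0 = x, z_1 = z_0 + h f(z_0, θ_0), z_{l+2} = z_l + 2h f(z_{l+1}, θ_{l+1}) for l = 0,…,L−2. Then there exists a constant C, independent of L, such that for all L ≥ 2 and all l = 0,1,…,L, |z(lh) − z_l| ≤ C h². -/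
noncomputable section

/- ---------------------------------------------------------------------------
Auxiliary lemmas
--------------------------------------------------------------------------- -/

lemma leapfrog_aux_abs_sub_le_of_mem_segment {a b t : ℝ} (ht : t ∈ segment ℝ a b) :
    |t - a| ≤ |b - a| := by
  rcases ht with ⟨μ, ν, hμ, hν, hs, hval⟩
  have : t - a = ν * (b - a) := by
    have hμ' : μ = 1 - ν := by linarith
    simp only [smul_eq_mul] at hval
    rw [← hval, hμ']; ring
  rw [this, abs_mul, abs_of_nonneg hν]
  nlinarith [abs_nonneg (b - a)]

/-- Second-order Taylor estimate, valid in both directions. -/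
lemma leapfrog_aux_taylor2 {E : Type*} [NormedAddCommGroup E] [NormedSpace ℝ E]
    {u u1 u2 u3 : ℝ → E} {s : Set ℝ} (hs : Convex ℝ s) {K : ℝ}
    (h1 : ∀ t ∈ s, HasDerivWithinAt u (u1 t) s t)
    (h2 : ∀ t ∈ s, HasDerivWithinAt u1 (u2 t) s t)
    (h3 : ∀ t ∈ s, HasDerivWithinAt u2 (u3 t) s t)
    (hK : ∀ t ∈ s, ‖u3 t‖ ≤ K)
    {a b : ℝ} (ha : a ∈ s) (hb : b ∈ s) :
    ‖u b - u a - (b - a) • u1 a - ((b - a) ^ 2 / 2) • u2 a‖ ≤ K * |b - a| ^ 3 := by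
  set I : Set ℝ := segment ℝ a b with hIdef
  have hIs : I ⊆ s := hs.segment_subset ha hb
  have hIconv : Convex ℝ I := convex_segment a b
  have haI : a ∈ I := left_mem_segment ℝ a b
  have hbI : b ∈ I := right_mem_segment ℝ a b
  have hK0 : 0 ≤ K := le_trans (norm_nonneg _) (hK a ha)
  have stepA : ∀ t ∈ I, ‖u2 t - u2 a‖ ≤ K * |b - a| := by
    intro t ht
    have := hs.norm_image_sub_le_of_norm_hasDerivWithin_le h3 hK ha (hIs ht)
    calc ‖u2 t - u2 a‖ ≤ K * ‖t - a‖ := this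
    _ ≤ K * |b - a| := by
        rw [Real.norm_eq_abs]
        exact mul_le_mul_of_nonneg_left (leapfrog_aux_abs_sub_le_of_mem_segment ht) hK0
  have stepB : ∀ t ∈ I, ‖u1 t - u1 a - (t - a) • u2 a‖ ≤ (K * |b - a|) * |b - a| := by
    intro t ht
    have hφ : ∀ r ∈ I, HasDerivWithinAt
        (fun r => u1 r - u1 a - (r - a) • u2 a) (u2 r - u2 a) I r := by
      intro r hr
      have p1 : HasDerivWithinAt (fun r => u1 r - u1 a) (u2 r) I r :=
        ((h2 r (hIs hr)).mono hIs).sub_const (u1 a)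
      have p2 : HasDerivWithinAt (fun r : ℝ => (r - a) • u2 a) (u2 a) I r := by
        simpa using (((hasDerivAt_id r).sub_const a).smul_const (u2 a)).hasDerivWithinAt
      exact p1.sub p2
    have := hIconv.norm_image_sub_le_of_norm_hasDerivWithin_le hφ stepA haI ht
    simp only [sub_self, zero_smul, sub_zero] at this
    calc ‖u1 t - u1 a - (t - a) • u2 a‖ ≤ (K * |b - a|) * ‖t - a‖ := by simpa using this
    _ ≤ (K * |b - a|) * |b - a| := by
        rw [Real.norm_eq_abs]
        exact mul_le_mul_of_nonneg_left (leapfrog_aux_abs_sub_le_of_mem_segment ht)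
          (by positivity)
  have hψ : ∀ r ∈ I, HasDerivWithinAt
      (fun r => u r - u a - (r - a) • u1 a - ((r - a) ^ 2 / 2) • u2 a)
      (u1 r - u1 a - (r - a) • u2 a) I r := by
    intro r hr
    have p1 : HasDerivWithinAt (fun r => u r - u a) (u1 r) I r :=
      ((h1 r (hIs hr)).mono hIs).sub_const (u a)
    have p2 : HasDerivWithinAt (fun r : ℝ => (r - a) • u1 a) (u1 a) I r := by
      simpa using (((hasDerivAt_id r).sub_const a).smul_const (u1 a)).hasDerivWithinAt
    have p3 : HasDerivAt (fun r : ℝ => ((r - a) ^ 2 / 2) • u2 a)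
        ((((2 : ℕ) * (r - a) ^ (2 - 1) * 1) / 2) • u2 a) r :=
      ((((hasDerivAt_id r).sub_const a).pow 2).div_const 2).smul_const (u2 a)
    have q := (p1.sub p2).sub p3.hasDerivWithinAt
    refine q.congr_deriv ?_
    module
  have := hIconv.norm_image_sub_le_of_norm_hasDerivWithin_le hψ stepB haI hbI
  simp only [sub_self, zero_smul, sub_zero, ne_eq, OfNat.ofNat_ne_zero,
    not_false_eq_true, zero_pow, zero_div] at this
  calc ‖u b - u a - (b - a) • u1 a - ((b - a) ^ 2 / 2) • u2 a‖
      ≤ (K * |b - a|) * |b - a| * ‖b - a‖ := by simpa using this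
  _ = K * |b - a| ^ 3 := by rw [Real.norm_eq_abs]; ring

section leapLemmas

variable {d n : ℕ}
    (f : EuclideanSpace ℝ (Fin d) × EuclideanSpace ℝ (Fin n) → EuclideanSpace ℝ (Fin d))
    (x : EuclideanSpace ℝ (Fin d)) (h : ℝ) (Θ : ℕ → EuclideanSpace ℝ (Fin n))

lemma leapfrog_aux_leap_zero : leap f x h Θ 0 = x := rfl

lemma leapfrog_aux_snd_leapPair (l : ℕ) : (leapPair f x h Θ l).2 = leap f x h Θ (l + 1) := by
  cases l <;> rfl

lemma leapfrog_aux_leap_one : leap f x h Θ 1 = x + h • f (x, Θ 0) := rfl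

lemma leapfrog_aux_leap_succ_succ (l : ℕ) :
    leap f x h Θ (l + 2) = leap f x h Θ l + (2 * h) • f (leap f x h Θ (l + 1), Θ (l + 1)) := by
  have : leap f x h Θ (l + 2) = (leapPair f x h Θ (l + 1)).2 := rfl
  rw [this, leapPair, leapfrog_aux_snd_leapPair]
  rfl

end leapLemmas

set_option maxHeartbeats 2000000 in
/-- Second-order convergence of the Leapfrog discretization of
`z' = f(z, θ(t))`: `|z(lh) − z_l| ≤ C h²` with `C` independent of `L`. -/
theorem leapfrog_second_order_convergence {d n : ℕ}
    (f : EuclideanSpace ℝ (Fin d) × EuclideanSpace ℝ (Fin n) → EuclideanSpace ℝ (Fin d))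
    (θ : ℝ → EuclideanSpace ℝ (Fin n))
    (x : EuclideanSpace ℝ (Fin d))
    (z : ℝ → EuclideanSpace ℝ (Fin d))
    (hf : ContDiff ℝ 2 f)
    (hfb : ∃ B : ℝ, ∀ i : ℕ, 1 ≤ i → i ≤ 2 → ∀ w, ‖iteratedFDeriv ℝ i f w‖ ≤ B)
    (hθ : ContDiff ℝ 2 θ)
    (hθb : ∃ B : ℝ, ∀ t, ‖iteratedFDeriv ℝ 2 θ t‖ ≤ B)
    (hz0 : z 0 = x)
    (hz : ∀ t ∈ Set.Icc (0 : ℝ) 1, HasDerivAt z (f (z t, θ t)) t) :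
    ∃ C : ℝ, ∀ L : ℕ, 2 ≤ L → ∀ h : ℝ, h = 1 / (L : ℝ) → ∀ l ≤ L,
      ‖z ((l : ℝ) * h) - leap f x h (fun j => θ ((j : ℝ) * h)) l‖ ≤ C * h ^ 2 := by
  classical
  obtain ⟨B, hB⟩ := hfb
  have hBnn : 0 ≤ B := le_trans (norm_nonneg _) (hB 1 le_rfl one_le_two (0, 0))
  -- Lipschitz property of `f` in its first argument
  have hfd : ∀ w, ‖fderiv ℝ f w‖ ≤ B := by
    intro w
    have h0 : ‖iteratedFDeriv ℝ 0 (fderiv ℝ f) w‖ = ‖iteratedFDeriv ℝ 1 f w‖ :=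
      norm_iteratedFDeriv_fderiv
    rw [norm_iteratedFDeriv_zero] at h0
    rw [h0]; exact hB 1 le_rfl one_le_two w
  have hLip : ∀ a b c, ‖f (a, c) - f (b, c)‖ ≤ B * ‖a - b‖ := by
    intro a b c
    have := Convex.norm_image_sub_le_of_norm_fderiv_le (f := f) (s := Set.univ)
      (fun w _ => (hf.differentiable two_ne_zero).differentiableAt)
      (fun w _ => hfd w) convex_univ (Set.mem_univ (b, c)) (Set.mem_univ (a, c))
    calc ‖f (a, c) - f (b, c)‖ ≤ B * ‖(a, c) - (b, c)‖ := this
    _ = B * ‖a - b‖ := by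
        congr 1
        rw [Prod.mk_sub_mk, Prod.norm_def]
        simp
  -- regularity of the flow
  set s : Set ℝ := Set.Icc (0 : ℝ) 1 with hsdef
  have h0s : (0 : ℝ) ∈ s := ⟨le_refl 0, zero_le_one⟩
  have hud : UniqueDiffOn ℝ s := uniqueDiffOn_Icc one_pos
  set z1 : ℝ → EuclideanSpace ℝ (Fin d) := fun t => f (z t, θ t) with hz1def
  have h1 : ∀ t ∈ s, HasDerivWithinAt z (z1 t) s t := fun t ht => (hz t ht).hasDerivWithinAt
  have hzdiff : DifferentiableOn ℝ z s := fun t ht =>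
    ((hz t ht).differentiableAt).differentiableWithinAt
  have hzd : ∀ t ∈ s, derivWithin z s t = z1 t := fun t ht => (h1 t ht).derivWithin (hud t ht)
  have hzc : ContinuousOn z s := hzdiff.continuousOn
  have hz1cont : ContinuousOn z1 s :=
    hf.continuous.comp_continuousOn (hzc.prodMk hθ.continuous.continuousOn)
  have hzC1 : ContDiffOn ℝ 1 z s := by
    rw [show (1 : WithTop ℕ∞) = 0 + 1 from rfl, contDiffOn_succ_iff_derivWithin hud]
    exact ⟨hzdiff, by simp, (contDiffOn_zero.2 hz1cont).congr hzd⟩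
  have hz1C1 : ContDiffOn ℝ 1 z1 s :=
    (hf.of_le one_le_two).comp_contDiffOn (hzC1.prodMk (hθ.of_le one_le_two).contDiffOn)
  have hzC2 : ContDiffOn ℝ 2 z s := by
    rw [show (2 : WithTop ℕ∞) = 1 + 1 from rfl, contDiffOn_succ_iff_derivWithin hud]
    exact ⟨hzdiff, by simp, hz1C1.congr hzd⟩
  have hz1C2 : ContDiffOn ℝ 2 z1 s := hf.comp_contDiffOn (hzC2.prodMk hθ.contDiffOn)
  set z2 : ℝ → EuclideanSpace ℝ (Fin d) := derivWithin z1 s with hz2def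
  have h2 : ∀ t ∈ s, HasDerivWithinAt z1 (z2 t) s t := fun t ht =>
    (hz1C2.differentiableOn (by norm_num) t ht).hasDerivWithinAt
  have hz2C1 : ContDiffOn ℝ 1 z2 s := hz1C2.derivWithin hud (by norm_num)
  set z3 : ℝ → EuclideanSpace ℝ (Fin d) := derivWithin z2 s with hz3def
  have h3 : ∀ t ∈ s, HasDerivWithinAt z2 (z3 t) s t := fun t ht =>
    (hz2C1.differentiableOn (by norm_num) t ht).hasDerivWithinAt
  have hz3cont : ContinuousOn z3 s := hz2C1.continuousOn_derivWithin hud le_rfl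
  obtain ⟨K2, hK2⟩ := isCompact_Icc.exists_bound_of_continuousOn hz2C1.continuousOn
  obtain ⟨K3, hK3⟩ := isCompact_Icc.exists_bound_of_continuousOn hz3cont
  have hK2nn : 0 ≤ K2 := le_trans (norm_nonneg _) (hK2 0 h0s)
  have hK3nn : 0 ≤ K3 := le_trans (norm_nonneg _) (hK3 0 h0s)
  have Tay : ∀ a ∈ s, ∀ b ∈ s,
      ‖z b - z a - (b - a) • z1 a - ((b - a) ^ 2 / 2) • z2 a‖ ≤ K3 * |b - a| ^ 3 :=
    fun a ha b hb => leapfrog_aux_taylor2 (convex_Icc 0 1) h1 h2 h3 hK3 ha hb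
  -- the constant
  refine ⟨Real.exp (2 * B) * (3 * K3 + K2 / 2), ?_⟩
  intro L hL h hhdef l hlL
  have hLpos : (0 : ℝ) < L := by
    have : 0 < L := by omega
    exact_mod_cast this
  have hh : 0 < h := by rw [hhdef]; positivity
  have hLh : (L : ℝ) * h = 1 := by rw [hhdef]; field_simp
  have hh1 : h ≤ 1 := by
    rw [hhdef, div_le_one hLpos]
    exact_mod_cast Nat.one_le_of_lt hL
  have mem : ∀ m : ℕ, m ≤ L → ((m : ℝ) * h) ∈ s := by
    intro m hm
    refine ⟨by positivity, ?_⟩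
    calc (m : ℝ) * h ≤ (L : ℝ) * h :=
          mul_le_mul_of_nonneg_right (by exact_mod_cast hm) hh.le
    _ = 1 := hLh
  set Θ : ℕ → EuclideanSpace ℝ (Fin n) := fun j : ℕ => θ ((j : ℝ) * h) with hΘdef
  set u : ℕ → ℝ := fun m => ‖z ((m : ℝ) * h) - leap f x h Θ m‖ with hudef
  have hunn : ∀ m, 0 ≤ u m := fun m => norm_nonneg _
  have hu0 : u 0 = 0 := by
    simp only [hudef, Nat.cast_zero, zero_mul, leapfrog_aux_leap_zero, hz0, sub_self, norm_zero]
  have hu1 : u 1 ≤ (K3 + K2 / 2) * h ^ 2 := by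
    have hmemh : h ∈ s := by simpa using mem 1 (by omega)
    have T := Tay 0 h0s h hmemh
    rw [sub_zero, abs_of_pos hh] at T
    have hΘ0 : Θ 0 = θ 0 := by rw [hΘdef]; norm_num
    have hz10 : z1 0 = f (z 0, θ 0) := by rw [hz1def]
    have iden : z (((1 : ℕ) : ℝ) * h) - leap f x h Θ 1
        = (z h - z 0 - h • z1 0 - (h ^ 2 / 2) • z2 0) + (h ^ 2 / 2) • z2 0 := by
      rw [leapfrog_aux_leap_one, hΘ0, hz10, ← hz0, Nat.cast_one, one_mul]
      module
    have hnorm : u 1 = ‖(z h - z 0 - h • z1 0 - (h ^ 2 / 2) • z2 0) + (h ^ 2 / 2) • z2 0‖ := by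
      simp only [hudef]; rw [iden]
    rw [hnorm]
    calc ‖(z h - z 0 - h • z1 0 - (h ^ 2 / 2) • z2 0) + (h ^ 2 / 2) • z2 0‖
        ≤ ‖z h - z 0 - h • z1 0 - (h ^ 2 / 2) • z2 0‖ + ‖(h ^ 2 / 2) • z2 0‖ := norm_add_le _ _
    _ ≤ K3 * h ^ 3 + (h ^ 2 / 2) * K2 := by
        refine add_le_add T ?_
        rw [norm_smul, Real.norm_eq_abs, abs_of_nonneg (by positivity)]
        exact mul_le_mul_of_nonneg_left (hK2 0 h0s) (by positivity)
    _ ≤ (K3 + K2 / 2) * h ^ 2 := by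
        nlinarith [mul_nonneg (mul_nonneg hK3nn (sq_nonneg h)) (sub_nonneg.2 hh1)]
  have urec : ∀ m, m + 2 ≤ L →
      u (m + 2) ≤ u m + 2 * h * B * u (m + 1) + 2 * K3 * h ^ 3 := by
    intro m hm
    have ha : (((m + 1 : ℕ) : ℝ) * h) ∈ s := mem _ (by omega)
    have hb2 : (((m + 2 : ℕ) : ℝ) * h) ∈ s := mem _ hm
    have hb0 : (((m : ℕ) : ℝ) * h) ∈ s := mem _ (by omega)
    have T1 := Tay _ ha _ hb2
    have T2 := Tay _ ha _ hb0
    have d1 : ((m + 2 : ℕ) : ℝ) * h - ((m + 1 : ℕ) : ℝ) * h = h := by push_cast; ring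
    have d2 : ((m : ℕ) : ℝ) * h - ((m + 1 : ℕ) : ℝ) * h = -h := by push_cast; ring
    rw [d1, abs_of_pos hh] at T1
    rw [d2, abs_neg, abs_of_pos hh] at T2
    have trunc : ‖z (((m + 2 : ℕ) : ℝ) * h) - z (((m : ℕ) : ℝ) * h)
        - (2 * h) • z1 (((m + 1 : ℕ) : ℝ) * h)‖ ≤ 2 * K3 * h ^ 3 := by
      have iden : z (((m + 2 : ℕ) : ℝ) * h) - z (((m : ℕ) : ℝ) * h)
          - (2 * h) • z1 (((m + 1 : ℕ) : ℝ) * h)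
          = (z (((m + 2 : ℕ) : ℝ) * h) - z (((m + 1 : ℕ) : ℝ) * h)
              - h • z1 (((m + 1 : ℕ) : ℝ) * h)
              - (h ^ 2 / 2) • z2 (((m + 1 : ℕ) : ℝ) * h))
            - (z (((m : ℕ) : ℝ) * h) - z (((m + 1 : ℕ) : ℝ) * h)
              - (-h) • z1 (((m + 1 : ℕ) : ℝ) * h)
              - ((-h) ^ 2 / 2) • z2 (((m + 1 : ℕ) : ℝ) * h)) := by module
      rw [iden]
      calc _ ≤ _ := norm_sub_le _ _
      _ ≤ K3 * h ^ 3 + K3 * h ^ 3 := add_le_add T1 T2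
      _ = 2 * K3 * h ^ 3 := by ring
    have hΘm : Θ (m + 1) = θ (((m + 1 : ℕ) : ℝ) * h) := by rw [hΘdef]
    have hz1a : z1 (((m + 1 : ℕ) : ℝ) * h)
        = f (z (((m + 1 : ℕ) : ℝ) * h), θ (((m + 1 : ℕ) : ℝ) * h)) := by rw [hz1def]
    have expand : z (((m + 2 : ℕ) : ℝ) * h) - leap f x h Θ (m + 2)
        = (z (((m : ℕ) : ℝ) * h) - leap f x h Θ m)
          + (2 * h) • (f (z (((m + 1 : ℕ) : ℝ) * h), θ (((m + 1 : ℕ) : ℝ) * h))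
              - f (leap f x h Θ (m + 1), θ (((m + 1 : ℕ) : ℝ) * h)))
          + (z (((m + 2 : ℕ) : ℝ) * h) - z (((m : ℕ) : ℝ) * h)
              - (2 * h) • z1 (((m + 1 : ℕ) : ℝ) * h)) := by
      rw [leapfrog_aux_leap_succ_succ, hΘm, hz1a]
      module
    have hstart : u (m + 2) = ‖z (((m + 2 : ℕ) : ℝ) * h) - leap f x h Θ (m + 2)‖ := by
      simp only [hudef]
    have hum1 : ‖z (((m + 1 : ℕ) : ℝ) * h) - leap f x h Θ (m + 1)‖ = u (m + 1) := by
      simp only [hudef]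
    have humeq : ‖z (((m : ℕ) : ℝ) * h) - leap f x h Θ m‖ = u m := by
      simp only [hudef]
    rw [hstart, expand]
    calc ‖(z (((m : ℕ) : ℝ) * h) - leap f x h Θ m)
          + (2 * h) • (f (z (((m + 1 : ℕ) : ℝ) * h), θ (((m + 1 : ℕ) : ℝ) * h))
              - f (leap f x h Θ (m + 1), θ (((m + 1 : ℕ) : ℝ) * h)))
          + (z (((m + 2 : ℕ) : ℝ) * h) - z (((m : ℕ) : ℝ) * h)
              - (2 * h) • z1 (((m + 1 : ℕ) : ℝ) * h))‖
        ≤ ‖z (((m : ℕ) : ℝ) * h) - leap f x h Θ m‖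
          + ‖(2 * h) • (f (z (((m + 1 : ℕ) : ℝ) * h), θ (((m + 1 : ℕ) : ℝ) * h))
              - f (leap f x h Θ (m + 1), θ (((m + 1 : ℕ) : ℝ) * h)))‖
          + ‖z (((m + 2 : ℕ) : ℝ) * h) - z (((m : ℕ) : ℝ) * h)
              - (2 * h) • z1 (((m + 1 : ℕ) : ℝ) * h)‖ := norm_add₃_le
    _ ≤ u m + 2 * h * B * u (m + 1) + 2 * K3 * h ^ 3 := by
        refine add_le_add (add_le_add humeq.le ?_) trunc
        rw [norm_smul, Real.norm_eq_abs, abs_of_pos (by positivity : (0:ℝ) < 2 * h)]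
        calc (2 * h) * ‖f (z (((m + 1 : ℕ) : ℝ) * h), θ (((m + 1 : ℕ) : ℝ) * h))
              - f (leap f x h Θ (m + 1), θ (((m + 1 : ℕ) : ℝ) * h))‖
            ≤ (2 * h) * (B * ‖z (((m + 1 : ℕ) : ℝ) * h) - leap f x h Θ (m + 1)‖) :=
            mul_le_mul_of_nonneg_left (hLip _ _ _) (by positivity)
        _ = 2 * h * B * u (m + 1) := by rw [hum1]; ring
  -- discrete Gronwall argument
  set A : ℝ := 1 + 2 * h * B with hAdef
  have hA1 : (1 : ℝ) ≤ A := by rw [hAdef]; nlinarith [hh.le, hBnn]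
  have hA0 : (0 : ℝ) ≤ A := by linarith
  have hc : (0 : ℝ) ≤ 2 * K3 * h ^ 3 :=
    mul_nonneg (mul_nonneg two_pos.le hK3nn) (pow_nonneg hh.le 3)
  have key : ∀ m, m + 1 ≤ L →
      max (u m) (u (m + 1)) ≤ A ^ m * (u 1 + (m : ℝ) * (2 * K3 * h ^ 3)) := by
    intro m
    induction m with
    | zero =>
        intro _
        simp only [pow_zero, one_mul, Nat.cast_zero, zero_mul, add_zero, zero_add]
        exact max_le (by rw [hu0]; exact hunn 1) le_rfl
    | succ m ih =>
        intro hm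
        have hmax := ih (by omega)
        have hX : 0 ≤ u 1 + (m : ℝ) * (2 * K3 * h ^ 3) := by
          have h1 := hunn 1
          have h2 : 0 ≤ (m : ℝ) * (2 * K3 * h ^ 3) := mul_nonneg (Nat.cast_nonneg m) hc
          linarith
        have hum : u m ≤ A ^ m * (u 1 + (m : ℝ) * (2 * K3 * h ^ 3)) :=
          le_trans (le_max_left _ _) hmax
        have hum1 : u (m + 1) ≤ A ^ m * (u 1 + (m : ℝ) * (2 * K3 * h ^ 3)) :=
          le_trans (le_max_right _ _) hmax
        have hrec := urec m hm
        have hpow1 : (1 : ℝ) ≤ A ^ (m + 1) := by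
          simpa using pow_le_pow_left₀ (by norm_num) hA1 (m + 1)
        have hpowm : A ^ m ≤ A ^ (m + 1) := pow_le_pow_right₀ hA1 (Nat.le_succ m)
        have hpownn : (0 : ℝ) ≤ A ^ m := pow_nonneg hA0 m
        have hcast : ((m + 1 : ℕ) : ℝ) = (m : ℝ) + 1 := by push_cast; ring
        have hAs : A ^ (m + 1) = A * A ^ m := by rw [pow_succ]; ring
        apply max_le
        · calc u (m + 1) ≤ A ^ m * (u 1 + (m : ℝ) * (2 * K3 * h ^ 3)) := hum1
          _ ≤ A ^ (m + 1) * (u 1 + ((m + 1 : ℕ) : ℝ) * (2 * K3 * h ^ 3)) := by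
              rw [hcast]
              nlinarith [hpowm, hX, hc, hpow1, hpownn]
        · have h2hB : (0 : ℝ) ≤ 2 * h * B := by positivity
          calc u (m + 2)
              ≤ u m + 2 * h * B * u (m + 1) + 2 * K3 * h ^ 3 := hrec
          _ ≤ A * (A ^ m * (u 1 + (m : ℝ) * (2 * K3 * h ^ 3))) + 2 * K3 * h ^ 3 := by
              have e : A * (A ^ m * (u 1 + (m : ℝ) * (2 * K3 * h ^ 3)))
                  = A ^ m * (u 1 + (m : ℝ) * (2 * K3 * h ^ 3))
                    + 2 * h * B * (A ^ m * (u 1 + (m : ℝ) * (2 * K3 * h ^ 3))) := by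
                rw [hAdef]; ring
              rw [e]
              have := mul_le_mul_of_nonneg_left hum1 h2hB
              linarith
          _ ≤ A ^ (m + 1) * (u 1 + ((m + 1 : ℕ) : ℝ) * (2 * K3 * h ^ 3)) := by
              rw [hcast, hAs]
              nlinarith [hpow1, hc, hX, hpownn, hA1, hAs]
  -- conclusion
  have hgoal : ‖z ((l : ℝ) * h) - leap f x h Θ l‖ = u l := by simp only [hudef]
  rw [hgoal]
  have hCnn : (0 : ℝ) ≤ Real.exp (2 * B) * (3 * K3 + K2 / 2) * h ^ 2 :=
    mul_nonneg (mul_nonneg (Real.exp_pos (2 * B)).le (by linarith)) (sq_nonneg h)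
  cases l with
  | zero => rw [hu0]; exact hCnn
  | succ m =>
      have hkey := key m hlL
      have h1' : u (m + 1) ≤ A ^ m * (u 1 + (m : ℝ) * (2 * K3 * h ^ 3)) :=
        le_trans (le_max_right _ _) hkey
      have hmh : (m : ℝ) * h ≤ 1 := (mem m (by omega)).2
      have hApow : A ^ m ≤ Real.exp (2 * B) := by
        have e1 : A ≤ Real.exp (2 * h * B) := by
          rw [hAdef]
          have := Real.add_one_le_exp (2 * h * B)
          linarith
        calc A ^ m ≤ (Real.exp (2 * h * B)) ^ m := pow_le_pow_left₀ hA0 e1 m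
        _ = Real.exp ((m : ℝ) * (2 * h * B)) := by rw [← Real.exp_nat_mul]
        _ ≤ Real.exp (2 * B) := by
            apply Real.exp_le_exp.2
            have h2B : (0 : ℝ) ≤ 2 * B := by linarith
            nlinarith [mul_le_mul_of_nonneg_right hmh h2B]
      have hX : u 1 + (m : ℝ) * (2 * K3 * h ^ 3) ≤ (3 * K3 + K2 / 2) * h ^ 2 := by
        have h3b : (m : ℝ) * (2 * K3 * h ^ 3) ≤ 2 * K3 * h ^ 2 := by
          nlinarith [hmh, hK3nn, hh.le, sq_nonneg h, (Nat.cast_nonneg m : (0:ℝ) ≤ (m:ℝ))]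
        nlinarith [hu1]
      have hXnn : 0 ≤ u 1 + (m : ℝ) * (2 * K3 * h ^ 3) := by
        have h1 := hunn 1
        have h2 : 0 ≤ (m : ℝ) * (2 * K3 * h ^ 3) := mul_nonneg (Nat.cast_nonneg m) hc
        linarith
      calc u (m + 1) ≤ A ^ m * (u 1 + (m : ℝ) * (2 * K3 * h ^ 3)) := h1'
      _ ≤ Real.exp (2 * B) * ((3 * K3 + K2 / 2) * h ^ 2) := by
          have e2 := (Real.exp_pos (2 * B)).le
          nlinarith [hApow, hX, hXnn, pow_nonneg hA0 m]
      _ = Real.exp (2 * B) * (3 * K3 + K2 / 2) * h ^ 2 := by ring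
end
end

section
/- In the setting of the averaged back-propagator (f three times continuously differentiable with bounded derivatives; θ twice continuously differentiable with bounded second derivative; g continuously differentiable with g and ∇g bounded and Lipschitz; z the exact solution of z'(t) = f(z(t), θ(t)) with z(0) = x; p the exact adjoint solution of −p'(t)ᵀ = p(t)ᵀ ∂_z f(z(t), θ(t)) with p(1)ᵀ = (g(z(1)) − y)∇g(z(1))ᵀ; p̂ defined by p̂_{L−1}ᵀ = 2(g(z(1)) − y)∇g(z(1))ᵀ and p̂_{L−2}ᵀ = 2h p̂_{L−1}ᵀ ∂_z f(z(1−h), θ_{L−1})), define q̂_{L−1} = (1/4)p̂_{L−2} + (1/2)p̂_{L−1}. Then there exists a constant C, independent of L, such that for all L ≥ 4, |q̂_{L−1} − p(1 − h)| ≤ C h², where h = 1/L and θ_{L−1} = θ((L−1)h). -/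
noncomputable section

section AveragedAux

lemma norm_fderiv_eq_iterated' {E F : Type*} [NormedAddCommGroup E] [NormedSpace ℝ E]
    [NormedAddCommGroup F] [NormedSpace ℝ F] (G : E → F) (x : E) :
    ‖fderiv ℝ G x‖ = ‖iteratedFDeriv ℝ 1 G x‖ := by
  rw [← norm_iteratedFDeriv_fderiv, norm_iteratedFDeriv_zero]

lemma norm_inl_le_one' {E F : Type*} [NormedAddCommGroup E] [NormedSpace ℝ E]
    [NormedAddCommGroup F] [NormedSpace ℝ F] : ‖ContinuousLinearMap.inl ℝ E F‖ ≤ 1 := by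
  apply ContinuousLinearMap.opNorm_le_bound _ zero_le_one
  intro v
  simp [Prod.norm_def]

end AveragedAux

set_option maxHeartbeats 1600000

/-- Final-layer step of the averaging argument: the weighted combination
`q̂_{L−1} = ¼ p̂_{L−2} + ½ p̂_{L−1}` matches the exact adjoint value `p(1 − h)` to order `h²`. -/
theorem averaged_backpropagator_final_layer {d n : ℕ}
    (f : EuclideanSpace ℝ (Fin d) × EuclideanSpace ℝ (Fin n) → EuclideanSpace ℝ (Fin d))
    (g : EuclideanSpace ℝ (Fin d) → ℝ)
    (θ : ℝ → EuclideanSpace ℝ (Fin n))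
    (x : EuclideanSpace ℝ (Fin d)) (y : ℝ)
    (z p : ℝ → EuclideanSpace ℝ (Fin d))
    (hf : ContDiff ℝ 3 f)
    (hfb : ∃ B : ℝ, ∀ i : ℕ, 1 ≤ i → i ≤ 3 → ∀ w, ‖iteratedFDeriv ℝ i f w‖ ≤ B)
    (hg : ContDiff ℝ 1 g)
    (hgb : ∃ B : ℝ, ∀ w, |g w| ≤ B ∧ ‖gradient g w‖ ≤ B)
    (hgl : ∃ K : NNReal, LipschitzWith K g ∧ LipschitzWith K (gradient g))
    (hθ : ContDiff ℝ 2 θ)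
    (hθb : ∃ B : ℝ, ∀ t, ‖iteratedFDeriv ℝ 2 θ t‖ ≤ B)
    (hz0 : z 0 = x)
    (hz : ∀ t ∈ Set.Icc (0 : ℝ) 1, HasDerivAt z (f (z t, θ t)) t)
    (hp : ∀ t ∈ Set.Icc (0 : ℝ) 1, HasDerivAt p
      (-(ContinuousLinearMap.adjoint (jacZ f (z t) (θ t))) (p t)) t)
    (hp1 : p 1 = (g (z 1) - y) • gradient g (z 1)) :
    ∃ C : ℝ, ∀ L : ℕ, 4 ≤ L → ∀ h : ℝ, h = 1 / (L : ℝ) →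
      ∀ phatL1 phatL2 qhatL1 : EuclideanSpace ℝ (Fin d),
      phatL1 = (2 * (g (z 1) - y)) • gradient g (z 1) →
      phatL2 = (2 * h) • (ContinuousLinearMap.adjoint
        (jacZ f (z (1 - h)) (θ (((L : ℝ) - 1) * h)))) phatL1 →
      qhatL1 = (1 / 4 : ℝ) • phatL2 + (1 / 2 : ℝ) • phatL1 →
      ‖qhatL1 - p (1 - h)‖ ≤ C * h ^ 2 := by
    classical
  obtain ⟨B₀, hB₀⟩ := hfb
  set B := max B₀ 0 with hBdef
  have hBnn : (0:ℝ) ≤ B := le_max_right _ _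
  have hB : ∀ i : ℕ, 1 ≤ i → i ≤ 3 → ∀ w, ‖iteratedFDeriv ℝ i f w‖ ≤ B :=
    fun i h1 h3 w => (hB₀ i h1 h3 w).trans (le_max_left _ _)
  have hfd : Differentiable ℝ f := hf.differentiable (by norm_num)
  have hfd1 : ∀ u, ‖fderiv ℝ f u‖ ≤ B := by
    intro u
    rw [norm_fderiv_eq_iterated']
    exact hB 1 le_rfl (by norm_num) u
  have hf' : ContDiff ℝ 2 (fderiv ℝ f) := hf.fderiv_right (by norm_num)
  have hfd2 : ∀ u v, ‖fderiv ℝ f u - fderiv ℝ f v‖ ≤ B * ‖u - v‖ := by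
    intro u v
    apply Convex.norm_image_sub_le_of_norm_fderiv_le
      (fun x _ => (hf'.differentiable (by norm_num)).differentiableAt)
      (fun x _ => ?_) convex_univ (Set.mem_univ v) (Set.mem_univ u)
    rw [norm_fderiv_eq_iterated', norm_iteratedFDeriv_fderiv]
    exact hB 2 (by norm_num) (by norm_num) x
  have hjac : ∀ (zz : EuclideanSpace ℝ (Fin d)) (w : EuclideanSpace ℝ (Fin n)),
      jacZ f zz w = (fderiv ℝ f (zz, w)).comp (ContinuousLinearMap.inl ℝ _ _) := by
    intro zz w
    exact ((hfd (zz, w)).hasFDerivAt.comp zz (hasFDerivAt_prodMk_left zz w)).fderiv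
  have hJb : ∀ zz w, ‖jacZ f zz w‖ ≤ B := by
    intro zz w
    rw [hjac]
    calc ‖(fderiv ℝ f (zz, w)).comp (ContinuousLinearMap.inl ℝ _ _)‖
        ≤ ‖fderiv ℝ f (zz, w)‖ * ‖ContinuousLinearMap.inl ℝ _ _‖ :=
          ContinuousLinearMap.opNorm_comp_le _ _
      _ ≤ B * 1 := mul_le_mul (hfd1 _) norm_inl_le_one' (norm_nonneg _) hBnn
      _ = B := mul_one B
  have hJdiff : ∀ zz w zz' w', ‖jacZ f zz w - jacZ f zz' w'‖ ≤ B * (‖zz - zz'‖ + ‖w - w'‖) := by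
    intro zz w zz' w'
    rw [hjac, hjac, ← ContinuousLinearMap.sub_comp]
    calc ‖(fderiv ℝ f (zz, w) - fderiv ℝ f (zz', w')).comp (ContinuousLinearMap.inl ℝ _ _)‖
        ≤ ‖fderiv ℝ f (zz, w) - fderiv ℝ f (zz', w')‖ * 1 := by
          refine le_trans (ContinuousLinearMap.opNorm_comp_le _ _) ?_
          exact mul_le_mul_of_nonneg_left norm_inl_le_one' (norm_nonneg _)
      _ ≤ (B * ‖((zz, w) : _ × _) - (zz', w')‖) * 1 := by
          exact mul_le_mul_of_nonneg_right (hfd2 _ _) zero_le_one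
      _ ≤ B * (‖zz - zz'‖ + ‖w - w'‖) := by
          rw [mul_one]
          refine mul_le_mul_of_nonneg_left ?_ hBnn
          rw [Prod.mk_sub_mk, Prod.norm_def]
          exact max_le (le_add_of_nonneg_right (norm_nonneg _))
            (le_add_of_nonneg_left (norm_nonneg _))
  have hzc : ContinuousOn z (Set.Icc 0 1) :=
    fun t ht => (hz t ht).continuousAt.continuousWithinAt
  have hpc : ContinuousOn p (Set.Icc 0 1) :=
    fun t ht => (hp t ht).continuousAt.continuousWithinAt
  obtain ⟨P₀, hP₀⟩ := (isCompact_Icc (a := (0:ℝ)) (b := 1)).exists_bound_of_continuousOn hpc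
  set P := max P₀ 0 with hPdef
  have hPnn : (0:ℝ) ≤ P := le_max_right _ _
  have hP : ∀ t ∈ Set.Icc (0:ℝ) 1, ‖p t‖ ≤ P := fun t ht => (hP₀ t ht).trans (le_max_left _ _)
  obtain ⟨Kz₀, hKz₀⟩ := (isCompact_Icc (a := (0:ℝ)) (b := 1)).exists_bound_of_continuousOn
      (f := fun t => f (z t, θ t))
      (hf.continuous.comp_continuousOn (hzc.prodMk hθ.continuous.continuousOn))
  set Kz := max Kz₀ 0 with hKzdef
  have hKznn : (0:ℝ) ≤ Kz := le_max_right _ _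
  have hKz : ∀ t ∈ Set.Icc (0:ℝ) 1, ‖f (z t, θ t)‖ ≤ Kz :=
    fun t ht => (hKz₀ t ht).trans (le_max_left _ _)
  have hθd : Differentiable ℝ θ := hθ.differentiable (by norm_num)
  obtain ⟨Kθ₀, hKθ₀⟩ := (isCompact_Icc (a := (0:ℝ)) (b := 1)).exists_bound_of_continuousOn
      ((hθ.continuous_deriv (by norm_num)).continuousOn)
  set Kθ := max Kθ₀ 0 with hKθdef
  have hKθnn : (0:ℝ) ≤ Kθ := le_max_right _ _
  have hKθ : ∀ t ∈ Set.Icc (0:ℝ) 1, ‖deriv θ t‖ ≤ Kθ :=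
    fun t ht => (hKθ₀ t ht).trans (le_max_left _ _)
  -- adjoint bounds
  have hAb : ∀ t, ‖ContinuousLinearMap.adjoint (jacZ f (z t) (θ t))‖ ≤ B := by
    intro t
    rw [LinearIsometryEquiv.norm_map]
    exact hJb _ _
  have hAdiff : ∀ t s, ‖ContinuousLinearMap.adjoint (jacZ f (z t) (θ t)) -
      ContinuousLinearMap.adjoint (jacZ f (z s) (θ s))‖ ≤ B * (‖z t - z s‖ + ‖θ t - θ s‖) := by
    intro t s
    rw [← map_sub, LinearIsometryEquiv.norm_map]
    exact hJdiff _ _ _ _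
  refine ⟨B * ((Kz + Kθ) * P) + B * (B * P) + B * (B * P), ?_⟩
  intro L hL h hh phatL1 phatL2 qhatL1 h1 h2 h3
  have hL4 : (4:ℝ) ≤ (L:ℝ) := by exact_mod_cast hL
  have hLpos : (0:ℝ) < (L:ℝ) := by linarith
  have hpos : 0 < h := by rw [hh]; positivity
  have hle : h ≤ 1/4 := by
    rw [hh, div_le_div_iff₀ hLpos (by norm_num)]
    linarith
  have ha0 : (0:ℝ) ≤ 1 - h := by linarith
  have hmemA : (1 - h) ∈ Set.Icc (0:ℝ) 1 := ⟨ha0, by linarith⟩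
  have hmem1 : (1:ℝ) ∈ Set.Icc (0:ℝ) 1 := ⟨by norm_num, le_rfl⟩
  have hsub : Set.Icc (1-h) 1 ⊆ Set.Icc (0:ℝ) 1 := Set.Icc_subset_Icc ha0 le_rfl
  have hmemA' : (1 - h) ∈ Set.Icc (1-h) (1:ℝ) := ⟨le_rfl, by linarith⟩
  have hmem1' : (1:ℝ) ∈ Set.Icc (1-h) (1:ℝ) := ⟨by linarith, le_rfl⟩
  have hθarg : ((L:ℝ) - 1) * h = 1 - h := by
    rw [hh]
    field_simp
  rw [hθarg] at h2
  -- Lipschitz estimates on [1-h, 1]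
  have hdist : ∀ t ∈ Set.Icc (1-h) (1:ℝ), ‖t - (1-h)‖ ≤ h := by
    intro t ht
    rw [Real.norm_eq_abs, abs_le]
    constructor
    · linarith [ht.1]
    · linarith [ht.2]
  have hzl : ∀ t ∈ Set.Icc (1-h) (1:ℝ), ‖z t - z (1-h)‖ ≤ Kz * h := by
    intro t ht
    have hb := Convex.norm_image_sub_le_of_norm_hasDerivWithin_le
      (f := z) (f' := fun t => f (z t, θ t)) (s := Set.Icc (1-h) 1)
      (fun s hs => (hz s (hsub hs)).hasDerivWithinAt)
      (fun s hs => hKz s (hsub hs)) (convex_Icc _ _) hmemA' ht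
    exact hb.trans (mul_le_mul_of_nonneg_left (hdist t ht) hKznn)
  have hθl : ∀ t ∈ Set.Icc (1-h) (1:ℝ), ‖θ t - θ (1-h)‖ ≤ Kθ * h := by
    intro t ht
    have hb := Convex.norm_image_sub_le_of_norm_hasDerivWithin_le
      (f := θ) (f' := fun t => deriv θ t) (s := Set.Icc (1-h) 1)
      (fun s hs => ((hθd s).hasDerivAt).hasDerivWithinAt)
      (fun s hs => hKθ s (hsub hs)) (convex_Icc _ _) hmemA' ht
    exact hb.trans (mul_le_mul_of_nonneg_left (hdist t ht) hKθnn)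
  have hpl : ∀ t ∈ Set.Icc (1-h) (1:ℝ), ‖p t - p (1-h)‖ ≤ B * P * h := by
    intro t ht
    have hbound : ∀ s ∈ Set.Icc (1-h) (1:ℝ),
        ‖-(ContinuousLinearMap.adjoint (jacZ f (z s) (θ s))) (p s)‖ ≤ B * P := by
      intro s hs
      rw [norm_neg]
      exact (ContinuousLinearMap.le_opNorm _ _).trans
        (mul_le_mul (hAb s) (hP s (hsub hs)) (norm_nonneg _) hBnn)
    have hb := Convex.norm_image_sub_le_of_norm_hasDerivWithin_le
      (f := p)
      (f' := fun t => -(ContinuousLinearMap.adjoint (jacZ f (z t) (θ t))) (p t))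
      (s := Set.Icc (1-h) 1)
      (fun s hs => (hp s (hsub hs)).hasDerivWithinAt)
      hbound (convex_Icc _ _) hmemA' ht
    exact hb.trans (mul_le_mul_of_nonneg_left (hdist t ht) (by positivity))
  -- the Taylor-type estimate
  have hM : ∀ t ∈ Set.Icc (1-h) (1:ℝ),
      ‖-(ContinuousLinearMap.adjoint (jacZ f (z t) (θ t))) (p t) +
        (ContinuousLinearMap.adjoint (jacZ f (z (1-h)) (θ (1-h)))) (p (1-h))‖ ≤
      B * ((Kz * h + Kθ * h)) * P + B * (B * P * h) := by
    intro t ht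
    rw [neg_add_eq_sub]
    have hsplit : (ContinuousLinearMap.adjoint (jacZ f (z (1-h)) (θ (1-h)))) (p (1-h)) -
        (ContinuousLinearMap.adjoint (jacZ f (z t) (θ t))) (p t) =
        ((ContinuousLinearMap.adjoint (jacZ f (z (1-h)) (θ (1-h)))) -
          (ContinuousLinearMap.adjoint (jacZ f (z t) (θ t)))) (p (1-h)) +
        (ContinuousLinearMap.adjoint (jacZ f (z t) (θ t))) (p (1-h) - p t) := by
      rw [ContinuousLinearMap.sub_apply, map_sub]
      abel
    rw [hsplit]
    refine (norm_add_le _ _).trans (add_le_add ?_ ?_)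
    · refine (ContinuousLinearMap.le_opNorm _ _).trans ?_
      refine mul_le_mul ?_ (hP _ hmemA) (norm_nonneg _) (by positivity)
      refine (hAdiff _ _).trans (mul_le_mul_of_nonneg_left (add_le_add ?_ ?_) hBnn)
      · rw [norm_sub_rev]; exact hzl t ht
      · rw [norm_sub_rev]; exact hθl t ht
    · refine (ContinuousLinearMap.le_opNorm _ _).trans ?_
      refine mul_le_mul (hAb t) ?_ (norm_nonneg _) hBnn
      rw [norm_sub_rev]; exact hpl t ht
  have key1 : ‖p 1 - p (1-h) + h •
      (ContinuousLinearMap.adjoint (jacZ f (z (1-h)) (θ (1-h)))) (p (1-h))‖ ≤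
      (B * ((Kz * h + Kθ * h)) * P + B * (B * P * h)) * h := by
    have hq : ∀ t ∈ Set.Icc (1-h) (1:ℝ), HasDerivWithinAt
        (fun s => p s + s • (ContinuousLinearMap.adjoint (jacZ f (z (1-h)) (θ (1-h)))) (p (1-h)))
        (-(ContinuousLinearMap.adjoint (jacZ f (z t) (θ t))) (p t) +
          (ContinuousLinearMap.adjoint (jacZ f (z (1-h)) (θ (1-h)))) (p (1-h)))
        (Set.Icc (1-h) 1) t := by
      intro t ht
      have hv : HasDerivAt (fun s : ℝ => s •
          (ContinuousLinearMap.adjoint (jacZ f (z (1-h)) (θ (1-h)))) (p (1-h)))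
          ((ContinuousLinearMap.adjoint (jacZ f (z (1-h)) (θ (1-h)))) (p (1-h))) t := by
        simpa using (hasDerivAt_id t).smul_const
          ((ContinuousLinearMap.adjoint (jacZ f (z (1-h)) (θ (1-h)))) (p (1-h)))
      exact ((hp t (hsub ht)).add hv).hasDerivWithinAt
    have hb := Convex.norm_image_sub_le_of_norm_hasDerivWithin_le hq hM (convex_Icc _ _)
      hmemA' hmem1'
    have heq : (p 1 + (1:ℝ) • (ContinuousLinearMap.adjoint (jacZ f (z (1-h)) (θ (1-h)))) (p (1-h)))
        - (p (1-h) + (1-h) • (ContinuousLinearMap.adjoint (jacZ f (z (1-h)) (θ (1-h)))) (p (1-h)))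
        = p 1 - p (1-h) + h • (ContinuousLinearMap.adjoint (jacZ f (z (1-h)) (θ (1-h)))) (p (1-h)) := by
      module
    rw [heq] at hb
    refine hb.trans ?_
    have : ‖(1:ℝ) - (1-h)‖ = h := by
      rw [Real.norm_eq_abs]
      rw [show (1:ℝ) - (1-h) = h by ring, abs_of_pos hpos]
    rw [this]
  have key2 : ‖(ContinuousLinearMap.adjoint (jacZ f (z (1-h)) (θ (1-h)))) (p 1) -
      (ContinuousLinearMap.adjoint (jacZ f (z (1-h)) (θ (1-h)))) (p (1-h))‖ ≤ B * (B * P * h) := by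
    rw [← map_sub]
    refine (ContinuousLinearMap.le_opNorm _ _).trans ?_
    exact mul_le_mul (hAb _) (hpl 1 hmem1') (norm_nonneg _) hBnn
  have hgr : (2 * (g (z 1) - y)) • gradient g (z 1) = (2:ℝ) • p 1 := by
    rw [hp1, smul_smul]
  have hq : qhatL1 - p (1-h) =
      (p 1 - p (1-h) + h • (ContinuousLinearMap.adjoint (jacZ f (z (1-h)) (θ (1-h)))) (p (1-h))) +
      h • ((ContinuousLinearMap.adjoint (jacZ f (z (1-h)) (θ (1-h)))) (p 1) -
        (ContinuousLinearMap.adjoint (jacZ f (z (1-h)) (θ (1-h)))) (p (1-h))) := by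
    rw [h3, h2, h1, hgr, map_smul]
    module
  rw [hq]
  refine (norm_add_le _ _).trans ?_
  have hsm : ‖h • ((ContinuousLinearMap.adjoint (jacZ f (z (1-h)) (θ (1-h)))) (p 1) -
      (ContinuousLinearMap.adjoint (jacZ f (z (1-h)) (θ (1-h)))) (p (1-h)))‖ ≤ h * (B * (B * P * h)) := by
    rw [norm_smul, Real.norm_eq_abs, abs_of_pos hpos]
    exact mul_le_mul_of_nonneg_left key2 hpos.le
  refine (add_le_add key1 hsm).trans (le_of_eq ?_)
  ring
end
end

section
/- Assume f : ℝ^d × ℝ^n → ℝ^d is continuously differentiable with bounded first derivatives and satisfies the linear-growth bound |f(z,θ)| ≤ C_f(|θ|² + 1)(|z| + 1) for all z, θ; assume g : ℝ^d → ℝ is continuously differentiable with g and ∇g bounded; assume θ : [0,1] → ℝ^n is continuous and bounded; fix x ∈ ℝ^d and y ∈ ℝ. Let z : [0,1] → ℝ^d solve z'(t) = f(z(t), θ(t)), z(0) = x, let p : [0,1] → ℝ^d solve −p'(t)ᵀ = p(t)ᵀ ∂_z f(z(t), θ(t)) with p(1)ᵀ = (g(z(1)) − y)∇g(z(1))ᵀ,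 and for each integer L ≥ 4 with h = 1/L, θ_l = θ(lh), let z_0,…,z_L be the Leapfrog network states, p_0,…,p_{L−1} the network back-propagator, and p̂_0,…,p̂_{L−1} the back-propagator recursion driven by exact values z(lh). Then there exists a constant M, independent of L, such that for all L ≥ 4: sup_{t∈[0,1]} |z(t)| ≤ M, sup_{t∈[0,1]} |p(t)| ≤ M, max_{0≤l≤L} |z_l| ≤ M, max_{0≤l≤L−1} |p_l| ≤ M, and max_{0≤l≤L−1} |p̂_l| ≤ M. -/
noncomputable section

theorem aux_backprop (L : ℕ) (hL : 4 ≤ L) (a P0 : ℝ) (ha : 0 ≤ a) (hP : 0 ≤ P0)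
    (u : ℕ → ℝ)
    (h1 : u (L-1) ≤ P0)
    (h2 : u (L-2) ≤ a * u (L-1))
    (h3 : ∀ l, 1 ≤ l → l + 3 ≤ L → u l ≤ u (l+2) + a * u (l+1))
    (h4 : u 0 ≤ (1/2) * u 2 + (a/2) * u 1)
    (hu : ∀ l, 0 ≤ u l) :
    ∀ l < L, u l ≤ P0 * (1+a)^L := by
  have hc : (1:ℝ) ≤ 1 + a := by linarith
  have key : ∀ k, k ≤ L - 2 → u (L-1-k) ≤ P0 * (1+a)^k := by
    intro k
    induction k using Nat.strong_induction_on with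
    | _ k ih =>
      intro hk
      match k with
      | 0 => simpa using h1
      | 1 =>
        have e : L - 1 - 1 = L - 2 := by omega
        rw [e]
        have hP1 : a * u (L-1) ≤ a * P0 := mul_le_mul_of_nonneg_left h1 ha
        calc u (L-2) ≤ a * P0 := le_trans h2 hP1
          _ ≤ P0 * (1+a)^1 := by nlinarith
      | (k'+2) =>
        have hl1 : 1 ≤ L - 1 - (k'+2) := by omega
        have hl3 : (L - 1 - (k'+2)) + 3 ≤ L := by omega
        have e1 : L - 1 - (k'+2) + 1 = L - 1 - (k'+1) := by omega
        have e2 : L - 1 - (k'+2) + 2 = L - 1 - k' := by omega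
        have H := h3 _ hl1 hl3
        rw [e1, e2] at H
        have i1 := ih k' (by omega) (by omega)
        have i2 := ih (k'+1) (by omega) (by omega)
        have hcpow : P0 * (1+a)^k' ≤ P0 * (1+a)^(k'+1) :=
          mul_le_mul_of_nonneg_left (pow_le_pow_right₀ (by linarith) (Nat.le_succ _)) hP
        have i2' : a * u (L-1-(k'+1)) ≤ a * (P0 * (1+a)^(k'+1)) :=
          mul_le_mul_of_nonneg_left i2 ha
        calc u (L-1-(k'+2)) ≤ u (L-1-k') + a * u (L-1-(k'+1)) := H
          _ ≤ P0 * (1+a)^(k'+1) + a * (P0 * (1+a)^(k'+1)) := by linarith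
          _ = P0 * (1+a)^(k'+2) := by ring
  have monoL : ∀ k ≤ L, P0 * (1+a)^k ≤ P0 * (1+a)^L := fun k hk =>
    mul_le_mul_of_nonneg_left (pow_le_pow_right₀ hc hk) hP
  intro l hl
  rcases Nat.eq_zero_or_pos l with rfl | hl0
  · have b2 : u 2 ≤ P0 * (1+a)^(L-3) := by
      have := key (L-3) (by omega); rwa [show L-1-(L-3)=2 by omega] at this
    have b1 : u 1 ≤ P0 * (1+a)^(L-2) := by
      have := key (L-2) le_rfl; rwa [show L-1-(L-2)=1 by omega] at this
    have m32 : P0 * (1+a)^(L-3) ≤ P0 * (1+a)^(L-2) :=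
      mul_le_mul_of_nonneg_left (pow_le_pow_right₀ hc (by omega)) hP
    have eL : P0 * (1+a)^L = (P0 * (1+a)^(L-2)) * (1+a)^2 := by
      rw [mul_assoc, ← pow_add]; congr 2; omega
    have pp : 0 ≤ P0 * (1+a)^(L-2) := by positivity
    calc u 0 ≤ (1/2) * u 2 + (a/2) * u 1 := h4
      _ ≤ (1/2) * (P0 * (1+a)^(L-2)) + (a/2) * (P0 * (1+a)^(L-2)) := by
          have := mul_le_mul_of_nonneg_left b1 (by linarith : (0:ℝ) ≤ a/2)
          have := mul_le_mul_of_nonneg_left (le_trans b2 m32) (by norm_num : (0:ℝ) ≤ 1/2)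
          linarith
      _ = ((1/2) + (a/2)) * (P0 * (1+a)^(L-2)) := by ring
      _ ≤ (1+a)^2 * (P0 * (1+a)^(L-2)) := mul_le_mul_of_nonneg_right (by nlinarith) pp
      _ = P0 * (1+a)^L := by rw [eL]; ring
  · have hk : L - 1 - (L - 1 - l) = l := by omega
    have := key (L-1-l) (by omega)
    rw [hk] at this
    exact le_trans this (monoL _ (by omega))


lemma leap_step {d n : ℕ}
    (f : EuclideanSpace ℝ (Fin d) × EuclideanSpace ℝ (Fin n) → EuclideanSpace ℝ (Fin d))
    (x : EuclideanSpace ℝ (Fin d)) (h : ℝ) (Θ : ℕ → EuclideanSpace ℝ (Fin n)) (l : ℕ) :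
    leap f x h Θ (l+2) = leap f x h Θ l + (2*h) • f (leap f x h Θ (l+1), Θ (l+1)) := rfl

set_option maxHeartbeats 1000000 in
/-- A-priori boundedness: the exact flow `z`, the exact adjoint `p`, the
Leapfrog states, the network back-propagator, and the exact-trajectory back-propagator are
all bounded uniformly in the number of layers `L`. -/
theorem apriori_boundedness {d n : ℕ}
    (f : EuclideanSpace ℝ (Fin d) × EuclideanSpace ℝ (Fin n) → EuclideanSpace ℝ (Fin d))
    (g : EuclideanSpace ℝ (Fin d) → ℝ)
    (θ : ℝ → EuclideanSpace ℝ (Fin n))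
    (x : EuclideanSpace ℝ (Fin d)) (y : ℝ)
    (z p : ℝ → EuclideanSpace ℝ (Fin d))
    (hf : ContDiff ℝ 1 f)
    (hfb : ∃ B : ℝ, ∀ w, ‖fderiv ℝ f w‖ ≤ B)
    (hfgrow : ∃ Cf : ℝ, 0 < Cf ∧ ∀ zv : EuclideanSpace ℝ (Fin d),
      ∀ w : EuclideanSpace ℝ (Fin n), ‖f (zv, w)‖ ≤ Cf * (‖w‖ ^ 2 + 1) * (‖zv‖ + 1))
    (hg : ContDiff ℝ 1 g)
    (hgb : ∃ B : ℝ, ∀ w, |g w| ≤ B ∧ ‖gradient g w‖ ≤ B)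
    (hθc : Continuous θ)
    (hθb : ∃ B : ℝ, ∀ t, ‖θ t‖ ≤ B)
    (hz0 : z 0 = x)
    (hz : ∀ t ∈ Set.Icc (0 : ℝ) 1, HasDerivAt z (f (z t, θ t)) t)
    (hp : ∀ t ∈ Set.Icc (0 : ℝ) 1, HasDerivAt p
      (-(ContinuousLinearMap.adjoint (jacZ f (z t) (θ t))) (p t)) t)
    (hp1 : p 1 = (g (z 1) - y) • gradient g (z 1)) :
    ∃ M : ℝ, ∀ L : ℕ, 4 ≤ L → ∀ h : ℝ, h = 1 / (L : ℝ) →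
      ∀ Θ : ℕ → EuclideanSpace ℝ (Fin n), Θ = (fun j : ℕ => θ ((j : ℝ) * h)) →
      ∀ pd phat : ℕ → EuclideanSpace ℝ (Fin d),
      -- back-propagator of the network
      pd (L - 1) = (2 * (g (leap f x h Θ L) - y)) • gradient g (leap f x h Θ L) →
      pd (L - 2) = (2 * h) • (ContinuousLinearMap.adjoint
        (jacZ f (leap f x h Θ (L - 1)) (Θ (L - 1)))) (pd (L - 1)) →
      (∀ l, 1 ≤ l → l + 3 ≤ L → pd l =
        pd (l + 2) + (2 * h) • (ContinuousLinearMap.adjoint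
          (jacZ f (leap f x h Θ (l + 1)) (Θ (l + 1)))) (pd (l + 1))) →
      pd 0 = (1 / 2 : ℝ) • pd 2 + h • (ContinuousLinearMap.adjoint
        (jacZ f (leap f x h Θ 1) (Θ 1))) (pd 1) →
      -- back-propagator driven by the exact trajectory
      phat (L - 1) = (2 * (g (z 1) - y)) • gradient g (z 1) →
      phat (L - 2) = (2 * h) • (ContinuousLinearMap.adjoint
        (jacZ f (z (((L : ℝ) - 1) * h)) (Θ (L - 1)))) (phat (L - 1)) →
      (∀ l, 1 ≤ l → l + 3 ≤ L → phat l =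
        phat (l + 2) + (2 * h) • (ContinuousLinearMap.adjoint
          (jacZ f (z (((l : ℝ) + 1) * h)) (Θ (l + 1)))) (phat (l + 1))) →
      phat 0 = (1 / 2 : ℝ) • phat 2 + h • (ContinuousLinearMap.adjoint
        (jacZ f (z h) (Θ 1))) (phat 1) →
      (∀ t ∈ Set.Icc (0 : ℝ) 1, ‖z t‖ ≤ M) ∧
      (∀ t ∈ Set.Icc (0 : ℝ) 1, ‖p t‖ ≤ M) ∧
      (∀ l ≤ L, ‖leap f x h Θ l‖ ≤ M) ∧
      (∀ l < L, ‖pd l‖ ≤ M) ∧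
      (∀ l < L, ‖phat l‖ ≤ M) := by
  classical
  obtain ⟨B, hB⟩ := hfb
  obtain ⟨Cf, hCf, hfg⟩ := hfgrow
  obtain ⟨Bg, hBg⟩ := hgb
  obtain ⟨Bθ, hBθ⟩ := hθb
  have hB0 : 0 ≤ B := le_trans (norm_nonneg _) (hB (x, θ 0))
  have hBθ0 : 0 ≤ Bθ := le_trans (norm_nonneg _) (hBθ 0)
  have hBg0 : 0 ≤ Bg := le_trans (abs_nonneg _) (hBg x).1
  have hK0 : (0:ℝ) < Cf * (Bθ^2 + 1) := by positivity
  set K : ℝ := Cf * (Bθ^2 + 1) with hKdef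
  -- Jacobian bound
  have hdf : Differentiable ℝ f := hf.differentiable one_ne_zero
  have hjac : ∀ (zv : EuclideanSpace ℝ (Fin d)) (w : EuclideanSpace ℝ (Fin n)),
      ‖jacZ f zv w‖ ≤ B := by
    intro zv w
    have hder : HasFDerivAt (fun v : EuclideanSpace ℝ (Fin d) => f (v, w))
        ((fderiv ℝ f (zv, w)).comp (ContinuousLinearMap.inl ℝ _ _)) zv :=
      (hdf (zv, w)).hasFDerivAt.comp zv (hasFDerivAt_prodMk_left zv w)
    rw [jacZ, hder.fderiv]
    refine ContinuousLinearMap.opNorm_le_bound _ hB0 fun v => ?_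
    have hnv : ‖((v, (0 : EuclideanSpace ℝ (Fin n))) :
        EuclideanSpace ℝ (Fin d) × EuclideanSpace ℝ (Fin n))‖ = ‖v‖ := by
      simp [Prod.norm_def]
    calc ‖(fderiv ℝ f (zv, w)) (v, (0 : EuclideanSpace ℝ (Fin n)))‖
        ≤ ‖fderiv ℝ f (zv, w)‖ * ‖((v, (0 : EuclideanSpace ℝ (Fin n))) :
            EuclideanSpace ℝ (Fin d) × EuclideanSpace ℝ (Fin n))‖ :=
          ContinuousLinearMap.le_opNorm _ _
      _ ≤ B * ‖v‖ := by rw [hnv]; exact mul_le_mul_of_nonneg_right (hB _) (norm_nonneg v)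
  have hadj : ∀ (zv : EuclideanSpace ℝ (Fin d)) (w : EuclideanSpace ℝ (Fin n))
      (v : EuclideanSpace ℝ (Fin d)),
      ‖(ContinuousLinearMap.adjoint (jacZ f zv w)) v‖ ≤ B * ‖v‖ := by
    intro zv w v
    calc ‖(ContinuousLinearMap.adjoint (jacZ f zv w)) v‖
        ≤ ‖ContinuousLinearMap.adjoint (jacZ f zv w)‖ * ‖v‖ :=
          ContinuousLinearMap.le_opNorm _ _
      _ ≤ B * ‖v‖ := by
          refine mul_le_mul_of_nonneg_right ?_ (norm_nonneg v)
          rw [LinearIsometryEquiv.norm_map]; exact hjac zv w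
  -- bounds for the continuous trajectories
  have hzc : ContinuousOn z (Set.Icc 0 1) :=
    fun t ht => ((hz t ht).continuousAt).continuousWithinAt
  have hpc : ContinuousOn p (Set.Icc 0 1) :=
    fun t ht => ((hp t ht).continuousAt).continuousWithinAt
  obtain ⟨Mz, hMz⟩ := isCompact_Icc.exists_bound_of_continuousOn hzc
  obtain ⟨Mp, hMp⟩ := isCompact_Icc.exists_bound_of_continuousOn hpc
  set P0 : ℝ := 2 * (Bg + |y|) * Bg with hP0def
  have hP0 : 0 ≤ P0 := by positivity
  set A : ℝ := (‖x‖ + 1) * (1 + K) with hAdef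
  have hA0 : 0 ≤ A := by positivity
  refine ⟨max (max Mz Mp) (max (A * Real.exp (2*K)) (P0 * Real.exp (2*B))), ?_⟩
  intro L hL h hh Θ hΘ pd phat hpdL1 hpdL2 hpdrec hpd0 hhatL1 hhatL2 hhatrec hhat0
  have hLpos : (0:ℝ) < (L:ℝ) := by exact_mod_cast Nat.lt_of_lt_of_le (by norm_num) hL
  have hh0 : 0 < h := by rw [hh]; positivity
  have hhL : h * (L:ℝ) = 1 := by rw [hh]; field_simp
  have hh1 : h ≤ 1 := by
    rw [hh, div_le_one hLpos]; exact_mod_cast Nat.le_of_lt (Nat.lt_of_lt_of_le (by norm_num) hL)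
  -- exponential bound for products
  have expB : ∀ b : ℝ, 0 ≤ b → (1 + 2*h*b)^L ≤ Real.exp (2*b) := by
    intro b hb
    have h1 : (1 + 2*h*b) ≤ Real.exp (2*h*b) := by
      have := Real.add_one_le_exp (2*h*b); linarith
    calc (1 + 2*h*b)^L ≤ (Real.exp (2*h*b))^L :=
          pow_le_pow_left₀ (by positivity) h1 L
      _ = Real.exp ((L:ℝ) * (2*h*b)) := (Real.exp_nat_mul _ L).symm
      _ = Real.exp (2*b) := by
          rw [show (L:ℝ)*(2*h*b) = 2*b*(h*(L:ℝ)) by ring, hhL, mul_one]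
  -- bound on f along the parameter path
  have hfK : ∀ (zv : EuclideanSpace ℝ (Fin d)) (l : ℕ), ‖f (zv, Θ l)‖ ≤ K * (‖zv‖ + 1) := by
    intro zv l
    have hθl : ‖Θ l‖ ≤ Bθ := by rw [hΘ]; exact hBθ _
    have hsq : ‖Θ l‖^2 ≤ Bθ^2 := by nlinarith [norm_nonneg (Θ l)]
    calc ‖f (zv, Θ l)‖ ≤ Cf * (‖Θ l‖^2 + 1) * (‖zv‖ + 1) := hfg zv (Θ l)
      _ ≤ K * (‖zv‖ + 1) := by
          rw [hKdef]
          have : Cf * (‖Θ l‖^2 + 1) ≤ Cf * (Bθ^2 + 1) :=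
            mul_le_mul_of_nonneg_left (by linarith) hCf.le
          exact mul_le_mul_of_nonneg_right this (by positivity)
  -- leapfrog growth
  have leapstep : ∀ l, leap f x h Θ (l+2)
      = leap f x h Θ l + (2*h) • f (leap f x h Θ (l+1), Θ (l+1)) := leap_step f x h Θ
  have hc1 : (1:ℝ) ≤ 1 + 2*h*K := by nlinarith
  have grow : ∀ l, (‖leap f x h Θ l‖ + 1 ≤ A * (1+2*h*K)^l)
      ∧ (‖leap f x h Θ (l+1)‖ + 1 ≤ A * (1+2*h*K)^(l+1)) := by
    intro l
    induction l with
    | zero =>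
      constructor
      · show ‖x‖ + 1 ≤ A * (1+2*h*K)^0
        rw [pow_zero, mul_one, hAdef]; nlinarith [norm_nonneg x]
      · show ‖x + h • f (x, Θ 0)‖ + 1 ≤ A * (1+2*h*K)^1
        have hn : ‖x + h • f (x, Θ 0)‖ ≤ ‖x‖ + h * ‖f (x, Θ 0)‖ := by
          calc ‖x + h • f (x, Θ 0)‖ ≤ ‖x‖ + ‖h • f (x, Θ 0)‖ := norm_add_le _ _
            _ = ‖x‖ + h * ‖f (x, Θ 0)‖ := by rw [norm_smul, Real.norm_eq_abs, abs_of_pos hh0]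
        have hfx := hfK x 0
        have step1 : ‖x + h • f (x, Θ 0)‖ + 1 ≤ (‖x‖ + 1) * (1 + h*K) := by
          have : h * ‖f (x, Θ 0)‖ ≤ h * (K * (‖x‖ + 1)) :=
            mul_le_mul_of_nonneg_left hfx hh0.le
          nlinarith
        have step2 : (1 + h*K) ≤ (1 + K) * (1 + 2*h*K) := by nlinarith
        calc ‖x + h • f (x, Θ 0)‖ + 1 ≤ (‖x‖ + 1) * (1 + h*K) := step1
          _ ≤ (‖x‖ + 1) * ((1 + K) * (1 + 2*h*K)) :=
              mul_le_mul_of_nonneg_left step2 (by positivity)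
          _ = A * (1+2*h*K)^1 := by rw [hAdef]; ring
    | succ l ih =>
      refine ⟨ih.2, ?_⟩
      rw [show l+1+1 = l+2 from rfl, leapstep l]
      have hn : ‖leap f x h Θ l + (2*h) • f (leap f x h Θ (l+1), Θ (l+1))‖
          ≤ ‖leap f x h Θ l‖ + 2*h * ‖f (leap f x h Θ (l+1), Θ (l+1))‖ := by
        calc _ ≤ ‖leap f x h Θ l‖ + ‖(2*h) • f (leap f x h Θ (l+1), Θ (l+1))‖ :=
              norm_add_le _ _
          _ = _ := by rw [norm_smul, Real.norm_eq_abs, abs_of_pos (by linarith)]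
      have hf2 : 2*h * ‖f (leap f x h Θ (l+1), Θ (l+1))‖
          ≤ 2*h*K * (‖leap f x h Θ (l+1)‖ + 1) := by
        have := mul_le_mul_of_nonneg_left (hfK (leap f x h Θ (l+1)) (l+1))
          (by linarith : (0:ℝ) ≤ 2*h)
        calc 2*h * ‖f (leap f x h Θ (l+1), Θ (l+1))‖
            ≤ 2*h * (K * (‖leap f x h Θ (l+1)‖ + 1)) := this
          _ = 2*h*K * (‖leap f x h Θ (l+1)‖ + 1) := by ring
      have hf3 : 2*h*K * (‖leap f x h Θ (l+1)‖ + 1) ≤ 2*h*K * (A * (1+2*h*K)^(l+1)) :=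
        mul_le_mul_of_nonneg_left ih.2 (by positivity)
      have hmono : A * (1+2*h*K)^l ≤ A * (1+2*h*K)^(l+1) :=
        mul_le_mul_of_nonneg_left (pow_le_pow_right₀ hc1 (Nat.le_succ _)) hA0
      have : ‖leap f x h Θ l + (2*h) • f (leap f x h Θ (l+1), Θ (l+1))‖ + 1
          ≤ A * (1+2*h*K)^(l+1) + 2*h*K * (A * (1+2*h*K)^(l+1)) := by
        have h1 := ih.1
        linarith
      calc ‖leap f x h Θ l + (2*h) • f (leap f x h Θ (l+1), Θ (l+1))‖ + 1
          ≤ A * (1+2*h*K)^(l+1) + 2*h*K * (A * (1+2*h*K)^(l+1)) := this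
        _ = A * (1+2*h*K)^(l+2) := by ring
  have leapBound : ∀ l ≤ L, ‖leap f x h Θ l‖ ≤ A * Real.exp (2*K) := by
    intro l hlL
    have h1 := (grow l).1
    have h2 : A * (1+2*h*K)^l ≤ A * (1+2*h*K)^L :=
      mul_le_mul_of_nonneg_left (pow_le_pow_right₀ hc1 hlL) hA0
    have h3 : A * (1+2*h*K)^L ≤ A * Real.exp (2*K) :=
      mul_le_mul_of_nonneg_left (expB K hK0.le) hA0
    linarith
  -- final-layer bound
  have hfinal : ∀ w : EuclideanSpace ℝ (Fin d),
      ‖(2 * (g w - y)) • gradient g w‖ ≤ P0 := by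
    intro w
    rw [norm_smul, Real.norm_eq_abs]
    have h1 : |2 * (g w - y)| ≤ 2 * (Bg + |y|) := by
      rw [abs_mul, abs_two]
      have : |g w - y| ≤ |g w| + |y| := abs_sub _ _
      have := (hBg w).1
      nlinarith
    calc |2 * (g w - y)| * ‖gradient g w‖ ≤ (2 * (Bg + |y|)) * Bg :=
        mul_le_mul h1 (hBg w).2 (norm_nonneg _) (by positivity)
      _ = P0 := by rw [hP0def]
  -- back-propagator bounds via the discrete Gronwall lemma
  have pdBound : ∀ l < L, ‖pd l‖ ≤ P0 * (1 + 2*h*B)^L := by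
    refine aux_backprop L hL (2*h*B) P0 (by positivity) hP0 (fun l => ‖pd l‖) ?_ ?_ ?_ ?_
      (fun l => norm_nonneg _)
    · beta_reduce
      rw [hpdL1]; exact hfinal _
    · beta_reduce
      rw [hpdL2, norm_smul, Real.norm_eq_abs, abs_of_pos (by linarith : (0:ℝ) < 2*h)]
      have := hadj (leap f x h Θ (L-1)) (Θ (L-1)) (pd (L-1))
      calc 2*h * ‖(ContinuousLinearMap.adjoint (jacZ f (leap f x h Θ (L-1)) (Θ (L-1)))) (pd (L-1))‖
          ≤ 2*h * (B * ‖pd (L-1)‖) := mul_le_mul_of_nonneg_left this (by linarith)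
        _ = 2*h*B * ‖pd (L-1)‖ := by ring
    · intro l hl1 hl3
      beta_reduce
      rw [hpdrec l hl1 hl3]
      have := hadj (leap f x h Θ (l+1)) (Θ (l+1)) (pd (l+1))
      calc ‖pd (l+2) + (2*h) • (ContinuousLinearMap.adjoint (jacZ f (leap f x h Θ (l+1)) (Θ (l+1)))) (pd (l+1))‖
          ≤ ‖pd (l+2)‖ + ‖(2*h) • (ContinuousLinearMap.adjoint (jacZ f (leap f x h Θ (l+1)) (Θ (l+1)))) (pd (l+1))‖ := norm_add_le _ _
        _ ≤ ‖pd (l+2)‖ + 2*h*B * ‖pd (l+1)‖ := by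
            rw [norm_smul, Real.norm_eq_abs, abs_of_pos (by linarith : (0:ℝ) < 2*h)]
            have h2 : 2*h * ‖(ContinuousLinearMap.adjoint (jacZ f (leap f x h Θ (l+1)) (Θ (l+1)))) (pd (l+1))‖ ≤ 2*h * (B * ‖pd (l+1)‖) :=
              mul_le_mul_of_nonneg_left this (by linarith)
            linarith
    · beta_reduce
      rw [hpd0]
      have := hadj (leap f x h Θ 1) (Θ 1) (pd 1)
      calc ‖(1/2 : ℝ) • pd 2 + h • (ContinuousLinearMap.adjoint (jacZ f (leap f x h Θ 1) (Θ 1))) (pd 1)‖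
          ≤ ‖(1/2 : ℝ) • pd 2‖ + ‖h • (ContinuousLinearMap.adjoint (jacZ f (leap f x h Θ 1) (Θ 1))) (pd 1)‖ := norm_add_le _ _
        _ ≤ 1/2 * ‖pd 2‖ + (2*h*B)/2 * ‖pd 1‖ := by
            rw [norm_smul, norm_smul, Real.norm_eq_abs, Real.norm_eq_abs,
              abs_of_pos hh0, abs_of_pos (by norm_num : (0:ℝ) < 1/2)]
            have h2 : h * ‖(ContinuousLinearMap.adjoint (jacZ f (leap f x h Θ 1) (Θ 1))) (pd 1)‖ ≤ h * (B * ‖pd 1‖) :=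
              mul_le_mul_of_nonneg_left this hh0.le
            linarith
  have phatBound : ∀ l < L, ‖phat l‖ ≤ P0 * (1 + 2*h*B)^L := by
    refine aux_backprop L hL (2*h*B) P0 (by positivity) hP0 (fun l => ‖phat l‖) ?_ ?_ ?_ ?_
      (fun l => norm_nonneg _)
    · beta_reduce
      rw [hhatL1]; exact hfinal _
    · beta_reduce
      rw [hhatL2, norm_smul, Real.norm_eq_abs, abs_of_pos (by linarith : (0:ℝ) < 2*h)]
      have := hadj (z (((L:ℝ)-1)*h)) (Θ (L-1)) (phat (L-1))
      calc 2*h * ‖(ContinuousLinearMap.adjoint (jacZ f (z (((L:ℝ)-1)*h)) (Θ (L-1)))) (phat (L-1))‖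
          ≤ 2*h * (B * ‖phat (L-1)‖) := mul_le_mul_of_nonneg_left this (by linarith)
        _ = 2*h*B * ‖phat (L-1)‖ := by ring
    · intro l hl1 hl3
      beta_reduce
      rw [hhatrec l hl1 hl3]
      have := hadj (z (((l:ℝ)+1)*h)) (Θ (l+1)) (phat (l+1))
      calc ‖phat (l+2) + (2*h) • (ContinuousLinearMap.adjoint (jacZ f (z (((l:ℝ)+1)*h)) (Θ (l+1)))) (phat (l+1))‖
          ≤ ‖phat (l+2)‖ + ‖(2*h) • (ContinuousLinearMap.adjoint (jacZ f (z (((l:ℝ)+1)*h)) (Θ (l+1)))) (phat (l+1))‖ := norm_add_le _ _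
        _ ≤ ‖phat (l+2)‖ + 2*h*B * ‖phat (l+1)‖ := by
            rw [norm_smul, Real.norm_eq_abs, abs_of_pos (by linarith : (0:ℝ) < 2*h)]
            have h2 : 2*h * ‖(ContinuousLinearMap.adjoint (jacZ f (z (((l:ℝ)+1)*h)) (Θ (l+1)))) (phat (l+1))‖ ≤ 2*h * (B * ‖phat (l+1)‖) :=
              mul_le_mul_of_nonneg_left this (by linarith)
            linarith
    · beta_reduce
      rw [hhat0]
      have := hadj (z h) (Θ 1) (phat 1)
      calc ‖(1/2 : ℝ) • phat 2 + h • (ContinuousLinearMap.adjoint (jacZ f (z h) (Θ 1))) (phat 1)‖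
          ≤ ‖(1/2 : ℝ) • phat 2‖ + ‖h • (ContinuousLinearMap.adjoint (jacZ f (z h) (Θ 1))) (phat 1)‖ := norm_add_le _ _
        _ ≤ 1/2 * ‖phat 2‖ + (2*h*B)/2 * ‖phat 1‖ := by
            rw [norm_smul, norm_smul, Real.norm_eq_abs, Real.norm_eq_abs,
              abs_of_pos hh0, abs_of_pos (by norm_num : (0:ℝ) < 1/2)]
            have h2 : h * ‖(ContinuousLinearMap.adjoint (jacZ f (z h) (Θ 1))) (phat 1)‖ ≤ h * (B * ‖phat 1‖) :=
              mul_le_mul_of_nonneg_left this hh0.le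
            linarith
  have hPexp : P0 * (1 + 2*h*B)^L ≤ P0 * Real.exp (2*B) :=
    mul_le_mul_of_nonneg_left (expB B hB0) hP0
  refine ⟨fun t ht => ?_, fun t ht => ?_, fun l hlL => ?_, fun l hlL => ?_, fun l hlL => ?_⟩
  · exact le_trans (hMz t ht) (le_trans (le_max_left _ _) (le_max_left _ _))
  · exact le_trans (hMp t ht) (le_trans (le_max_right _ _) (le_max_left _ _))
  · exact le_trans (leapBound l hlL) (le_trans (le_max_left _ _) (le_max_right _ _))
  · exact le_trans (pdBound l hlL) (le_trans hPexp (le_trans (le_max_right _ _) (le_max_right _ _)))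
  · exact le_trans (phatBound l hlL) (le_trans hPexp (le_trans (le_max_right _ _) (le_max_right _ _)))
end
end
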